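/- arXiv:1208.3183 — 8 statements merged into one kernel-verified Lean document; each statement's English description precedes it below -/
import Mathlib

section
/- Fix m > 0 and for E ∈ ℝ define Γ_E(Q₁,Q₂,P₁,P₂) = (1/16)Q₂²P₁² + (1/(16m))Q₁²P₂² − (1/2)m²Q₁² − (1/2)Q₂² − 4mQ₁²Q₂²/√(Q₁⁴+Q₂⁴) − EQ₁²Q₂². If γ(s) = (Q₁(s), Q₂(s), P₁(s), P₂(s)) is a solution of the Hamiltonian system z' = J∇Γ_E(z) on an interval avoiding Q₁ = Q₂ = 0, then for every ε > 0 the rescaled curve γ_ε(s) = (εQ₁(εs), εQ₂(εs), P₁(εs), P₂(εs)) is a solution of the Hamiltonian system z' = J∇Γ_{E/ε²}(z) with energy parameter E/ε². -/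
open Matrix

noncomputable section

/-- The gradient of `f : (ι → ℝ) → ℝ` as the vector of partial derivatives. -/
def grad {ι : Type*} [Fintype ι] [DecidableEq ι] (f : (ι → ℝ) → ℝ) (z : ι → ℝ) : ι → ℝ :=
  fun i => fderiv ℝ f z (Pi.single i 1)

/-- The standard `2n × 2n` symplectic matrix `[[0, I], [-I, 0]]`. -/
def Jmat (n : ℕ) : Matrix (Fin n ⊕ Fin n) (Fin n ⊕ Fin n) ℝ :=
  Matrix.fromBlocks 0 1 (-1) 0

/-- The regularized two-degree-of-freedom rhomboidal Hamiltonian in extended phase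
space, with mass parameter `m` and energy parameter `E`.  Coordinates are ordered
`(Q₁, Q₂, P₁, P₂)`, with `Q₁ = z (Sum.inl 0)`, `Q₂ = z (Sum.inl 1)`,
`P₁ = z (Sum.inr 0)`, `P₂ = z (Sum.inr 1)`. -/
def Gamma2 (m E : ℝ) (z : (Fin 2 ⊕ Fin 2) → ℝ) : ℝ :=
  (1 / 16) * (z (Sum.inl 1)) ^ 2 * (z (Sum.inr 0)) ^ 2
    + (1 / (16 * m)) * (z (Sum.inl 0)) ^ 2 * (z (Sum.inr 1)) ^ 2
    - (1 / 2) * m ^ 2 * (z (Sum.inl 0)) ^ 2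
    - (1 / 2) * (z (Sum.inl 1)) ^ 2
    - 4 * m * (z (Sum.inl 0)) ^ 2 * (z (Sum.inl 1)) ^ 2
        / Real.sqrt ((z (Sum.inl 0)) ^ 4 + (z (Sum.inl 1)) ^ 4)
    - E * (z (Sum.inl 0)) ^ 2 * (z (Sum.inl 1)) ^ 2

/-- `J` applied to a vector swaps blocks with a sign. -/
lemma Jmat_mulVec (v : (Fin 2 ⊕ Fin 2) → ℝ) :
    (Jmat 2).mulVec v = Sum.elim (fun i => v (Sum.inr i)) (fun i => -v (Sum.inl i)) := by
  have hv : v = Sum.elim (fun i => v (Sum.inl i)) (fun i => v (Sum.inr i)) := by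
    funext j; cases j <;> rfl
  rw [Jmat, hv, Matrix.fromBlocks_mulVec]
  simp [Matrix.neg_mulVec]
  rfl

/-- `Gamma2` is differentiable away from `Q₁ = Q₂ = 0`. -/
lemma gamma2_diffAt (m E : ℝ) {z : (Fin 2 ⊕ Fin 2) → ℝ}
    (h : ¬(z (Sum.inl 0) = 0 ∧ z (Sum.inl 1) = 0)) :
    DifferentiableAt ℝ (Gamma2 m E) z := by
  have h4 : 0 < z (Sum.inl 0) ^ 4 + z (Sum.inl 1) ^ 4 := by
    rcases not_and_or.mp h with h | h <;> positivity
  have hc : ∀ i, DifferentiableAt ℝ (fun z : (Fin 2 ⊕ Fin 2) → ℝ => z i) z := fun i =>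
    (ContinuousLinearMap.proj i : ((Fin 2 ⊕ Fin 2) → ℝ) →L[ℝ] ℝ).differentiableAt
  have harg : DifferentiableAt ℝ
      (fun z : (Fin 2 ⊕ Fin 2) → ℝ => z (Sum.inl 0) ^ 4 + z (Sum.inl 1) ^ 4) z :=
    ((hc _).pow 4).add ((hc _).pow 4)
  have hsq : DifferentiableAt ℝ
      (fun z : (Fin 2 ⊕ Fin 2) → ℝ => Real.sqrt (z (Sum.inl 0) ^ 4 + z (Sum.inl 1) ^ 4)) z :=
    harg.sqrt h4.ne'
  have hsqne : Real.sqrt (z (Sum.inl 0) ^ 4 + z (Sum.inl 1) ^ 4) ≠ 0 :=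
    (Real.sqrt_pos.mpr h4).ne'
  unfold Gamma2
  apply DifferentiableAt.sub
  apply DifferentiableAt.sub
  apply DifferentiableAt.sub
  apply DifferentiableAt.sub
  apply DifferentiableAt.add
  · exact ((differentiableAt_const _).mul ((hc _).pow 2)).mul ((hc _).pow 2)
  · exact ((differentiableAt_const _).mul ((hc _).pow 2)).mul ((hc _).pow 2)
  · exact ((differentiableAt_const _).mul ((hc _).pow 2))
  · exact ((differentiableAt_const _).mul ((hc _).pow 2))
  · have hnum : DifferentiableAt ℝ
        (fun z : (Fin 2 ⊕ Fin 2) → ℝ => 4 * m * z (Sum.inl 0) ^ 2 * z (Sum.inl 1) ^ 2) z :=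
      (((differentiableAt_const _).mul ((hc _).pow 2)).mul ((hc _).pow 2))
    simp only [div_eq_mul_inv]
    exact hnum.mul (hsq.inv hsqne)
  · exact (((differentiableAt_const _).mul ((hc _).pow 2)).mul ((hc _).pow 2))

/-- Scaling identity for the Hamiltonian. -/
lemma gamma2_scale (m E ε : ℝ) (hε : 0 < ε) (z : (Fin 2 ⊕ Fin 2) → ℝ) :
    Gamma2 m (E / ε ^ 2) (fun i => Sum.elim (fun _ => ε) (fun _ => (1 : ℝ)) i * z i)
      = ε ^ 2 * Gamma2 m E z := by
  have hsq : Real.sqrt ((ε * z (Sum.inl 0)) ^ 4 + (ε * z (Sum.inl 1)) ^ 4)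
      = ε ^ 2 * Real.sqrt (z (Sum.inl 0) ^ 4 + z (Sum.inl 1) ^ 4) := by
    rw [show (ε * z (Sum.inl 0)) ^ 4 + (ε * z (Sum.inl 1)) ^ 4
        = (ε ^ 2) ^ 2 * (z (Sum.inl 0) ^ 4 + z (Sum.inl 1) ^ 4) by ring,
      Real.sqrt_mul (by positivity), Real.sqrt_sq (by positivity)]
  simp only [Gamma2, Sum.elim_inl, Sum.elim_inr, one_mul, hsq]
  have hdiv : 4 * m * (ε * z (Sum.inl 0)) ^ 2 * (ε * z (Sum.inl 1)) ^ 2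
      / (ε ^ 2 * Real.sqrt (z (Sum.inl 0) ^ 4 + z (Sum.inl 1) ^ 4))
      = ε ^ 2 * (4 * m * z (Sum.inl 0) ^ 2 * z (Sum.inl 1) ^ 2
        / Real.sqrt (z (Sum.inl 0) ^ 4 + z (Sum.inl 1) ^ 4)) := by
    rw [show 4 * m * (ε * z (Sum.inl 0)) ^ 2 * (ε * z (Sum.inl 1)) ^ 2
        = ε ^ 2 * (ε ^ 2 * (4 * m * z (Sum.inl 0) ^ 2 * z (Sum.inl 1) ^ 2)) by ring,
      mul_div_assoc, mul_div_mul_left _ _ (pow_ne_zero 2 hε.ne'), mul_div_assoc]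
  rw [hdiv]
  have hE : E / ε ^ 2 * (ε * z (Sum.inl 0)) ^ 2 * (ε * z (Sum.inl 1)) ^ 2
      = ε ^ 2 * (E * z (Sum.inl 0) ^ 2 * z (Sum.inl 1) ^ 2) := by
    field_simp
  rw [hE]; ring

/-- The scaling map as a continuous linear map. -/
def Scl (ε : ℝ) : ((Fin 2 ⊕ Fin 2) → ℝ) →L[ℝ] ((Fin 2 ⊕ Fin 2) → ℝ) :=
  ContinuousLinearMap.pi fun i =>
    (Sum.elim (fun _ => ε) (fun _ => (1 : ℝ)) i) • ContinuousLinearMap.proj i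

lemma Scl_apply (ε : ℝ) (x : (Fin 2 ⊕ Fin 2) → ℝ) :
    Scl ε x = fun i => Sum.elim (fun _ => ε) (fun _ => (1 : ℝ)) i * x i := by
  funext i
  simp [Scl]

/-- Scaling relation for the gradient of `Gamma2`. -/
lemma grad_scale (m E ε : ℝ) (hε : 0 < ε) {z : (Fin 2 ⊕ Fin 2) → ℝ}
    (h : ¬(z (Sum.inl 0) = 0 ∧ z (Sum.inl 1) = 0)) :
    (∀ i, grad (Gamma2 m (E / ε ^ 2))
        (fun j => Sum.elim (fun _ => ε) (fun _ => (1 : ℝ)) j * z j) (Sum.inl i)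
        = ε * grad (Gamma2 m E) z (Sum.inl i)) ∧
    (∀ i, grad (Gamma2 m (E / ε ^ 2))
        (fun j => Sum.elim (fun _ => ε) (fun _ => (1 : ℝ)) j * z j) (Sum.inr i)
        = ε ^ 2 * grad (Gamma2 m E) z (Sum.inr i)) := by
  set c : (Fin 2 ⊕ Fin 2) → ℝ := Sum.elim (fun _ => ε) (fun _ => (1 : ℝ)) with hc
  set w : (Fin 2 ⊕ Fin 2) → ℝ := fun j => c j * z j with hwdef
  have hw : ¬(w (Sum.inl 0) = 0 ∧ w (Sum.inl 1) = 0) := by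
    simp only [hwdef, hc, Sum.elim_inl, mul_eq_zero]
    rintro ⟨h1 | h1, h2 | h2⟩
    · exact hε.ne' h1
    · exact hε.ne' h1
    · exact hε.ne' h2
    · exact h ⟨h1, h2⟩
  have hΓ' := gamma2_diffAt m (E / ε ^ 2) hw
  have hΓ := gamma2_diffAt m E h
  have hSz : Scl ε z = w := Scl_apply ε z
  have hΓw : HasFDerivAt (Gamma2 m (E / ε ^ 2)) (fderiv ℝ (Gamma2 m (E / ε ^ 2)) w)
      (Scl ε z) := by rw [hSz]; exact hΓ'.hasFDerivAt
  have h1 : HasFDerivAt (fun x => Gamma2 m (E / ε ^ 2) (Scl ε x))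
      ((fderiv ℝ (Gamma2 m (E / ε ^ 2)) w).comp (Scl ε)) z :=
    hΓw.comp z (Scl ε).hasFDerivAt
  have h2 : (fun x => Gamma2 m (E / ε ^ 2) (Scl ε x)) = fun x => ε ^ 2 * Gamma2 m E x := by
    funext x
    rw [Scl_apply]
    exact gamma2_scale m E ε hε x
  rw [h2] at h1
  have h3 : HasFDerivAt (fun x => ε ^ 2 * Gamma2 m E x)
      ((ε ^ 2) • fderiv ℝ (Gamma2 m E) z) z := hΓ.hasFDerivAt.const_mul (ε ^ 2)
  have huniq := h1.unique h3
  have hkey : ∀ j, c j * fderiv ℝ (Gamma2 m (E / ε ^ 2)) w (Pi.single j 1)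
      = ε ^ 2 * fderiv ℝ (Gamma2 m E) z (Pi.single j 1) := by
    intro j
    have hsingle : Scl ε (Pi.single j 1)
        = (c j • (Pi.single j 1 : (Fin 2 ⊕ Fin 2) → ℝ) : (Fin 2 ⊕ Fin 2) → ℝ) := by
      rw [Scl_apply]
      funext i
      rcases eq_or_ne i j with rfl | hij
      · simp [hc]
      · simp [Pi.single_apply, hij]
    have := congrArg (fun L => L (Pi.single j 1)) huniq
    simpa [hsingle, _root_.map_smul, smul_eq_mul] using this
  constructor
  · intro i
    have := hkey (Sum.inl i)
    simp only [hc, Sum.elim_inl] at this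
    apply mul_left_cancel₀ hε.ne'
    simp only [grad]
    rw [this]; ring
  · intro i
    have := hkey (Sum.inr i)
    simp only [hc, Sum.elim_inr, one_mul] at this
    simp only [grad]
    exact this

/-- If `γ(s) = (Q₁, Q₂, P₁, P₂)(s)` solves the Hamiltonian system `z' = J∇Γ_E(z)`
on an interval avoiding `Q₁ = Q₂ = 0`, then for every `ε > 0` the rescaled curve
`γ_ε(s) = (εQ₁(εs), εQ₂(εs), P₁(εs), P₂(εs))` solves `z' = J∇Γ_{E/ε²}(z)`. -/
theorem rescaled_orbit_is_solution (m E : ℝ) (hm : 0 < m)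
    (I : Set ℝ) (γ : ℝ → (Fin 2 ⊕ Fin 2) → ℝ)
    (havoid : ∀ s ∈ I, ¬(γ s (Sum.inl 0) = 0 ∧ γ s (Sum.inl 1) = 0))
    (hγ : ∀ s ∈ I, HasDerivAt γ ((Jmat 2).mulVec (grad (Gamma2 m E) (γ s))) s)
    (ε : ℝ) (hε : 0 < ε) :
    ∀ s : ℝ, ε * s ∈ I →
      HasDerivAt
        (fun t => (Sum.elim (fun i => ε * γ (ε * t) (Sum.inl i))
          (fun i => γ (ε * t) (Sum.inr i)) : (Fin 2 ⊕ Fin 2) → ℝ))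
        ((Jmat 2).mulVec (grad (Gamma2 m (E / ε ^ 2))
          (Sum.elim (fun i => ε * γ (ε * s) (Sum.inl i))
            (fun i => γ (ε * s) (Sum.inr i)))))
        s := by
  intro s hs
  set z : (Fin 2 ⊕ Fin 2) → ℝ := γ (ε * s) with hz
  set v : (Fin 2 ⊕ Fin 2) → ℝ := (Jmat 2).mulVec (grad (Gamma2 m E) z) with hv
  have hpt : ∀ t : ℝ, (Sum.elim (fun i => ε * γ (ε * t) (Sum.inl i))
      (fun i => γ (ε * t) (Sum.inr i)) : (Fin 2 ⊕ Fin 2) → ℝ)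
      = fun j => Sum.elim (fun _ => ε) (fun _ => (1 : ℝ)) j * γ (ε * t) j := by
    intro t; funext j; cases j <;> simp
  have hgr := grad_scale m E ε hε (havoid _ hs)
  have hmul : HasDerivAt (fun t : ℝ => ε * t) ε s := by
    simpa using (hasDerivAt_id s).const_mul ε
  have hcomp : HasDerivAt (fun t => γ (ε * t)) (ε • v) s :=
    HasDerivAt.scomp s (hγ (ε * s) hs) hmul
  have hfinal : HasDerivAt (fun t => Scl ε (γ (ε * t))) (Scl ε (ε • v)) s :=
    (Scl ε).hasFDerivAt.comp_hasDerivAt s hcomp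
  have hfun : (fun t => Scl ε (γ (ε * t)))
      = fun t => (Sum.elim (fun i => ε * γ (ε * t) (Sum.inl i))
        (fun i => γ (ε * t) (Sum.inr i)) : (Fin 2 ⊕ Fin 2) → ℝ) := by
    funext t
    rw [Scl_apply, hpt t]
  have hval : Scl ε (ε • v) = (Jmat 2).mulVec (grad (Gamma2 m (E / ε ^ 2))
      (Sum.elim (fun i => ε * γ (ε * s) (Sum.inl i))
        (fun i => γ (ε * s) (Sum.inr i)))) := by
    rw [hpt s, Scl_apply, Jmat_mulVec]
    funext j
    have hvJ : v = Sum.elim (fun i => grad (Gamma2 m E) z (Sum.inr i))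
        (fun i => -grad (Gamma2 m E) z (Sum.inl i)) := Jmat_mulVec _
    cases j with
    | inl i =>
      simp only [Sum.elim_inl, hvJ, Pi.smul_apply, smul_eq_mul]
      rw [hgr.2 i]
      ring
    | inr i =>
      simp only [Sum.elim_inr, hvJ, Pi.smul_apply, smul_eq_mul]
      rw [hgr.1 i]
      ring
  rw [hfun] at hfinal
  rw [← hval]
  exact hfinal
end
end

section
/- Let Γ : Ω → ℝ be C² on an open set Ω ⊆ ℝ^{2n}, J the standard 2n×2n symplectic matrix, and γ a T-periodic solution of z' = J∇Γ(z). Suppose S is an orthogonal 2n×2n matrix and N ∈ ℕ such that (i) γ(−s + T/N) = Sγ(s) for all s, (ii) Γ(Sz) = Γ(z) for all z ∈ Ω (with SΩ = Ω), and (iii) SJ = −JS. If X(s) is the fundamental matrix solution of the linearized equations ξ' = JD²Γ(γ(s))ξ with X(0) = I, then X(−s + T/N) = S X(s) Sᵀ X(T/N) for all s. -/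
open Matrix Set
open scoped NNReal

noncomputable section

/-- The Hessian `D²f` of `f : (ι → ℝ) → ℝ` as a matrix of second partial derivatives. -/
def hessM {ι : Type*} [Fintype ι] [DecidableEq ι] (f : (ι → ℝ) → ℝ) (z : ι → ℝ) :
    Matrix ι ι ℝ :=
  Matrix.of fun i j => fderiv ℝ (fun w => fderiv ℝ f w (Pi.single j 1)) z (Pi.single i 1)

section Helpers
variable {ι : Type*} [Fintype ι]

/-- Lipschitz bound for `mulVec` in the sup norm, with constant the sum of abs entries. -/
lemma mulVec_lipschitz (M : Matrix ι ι ℝ) :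
    LipschitzWith (∑ i, ∑ j, ‖M i j‖₊) (M.mulVec) := by
  apply LipschitzWith.of_dist_le_mul
  intro x y
  rw [dist_eq_norm, ← Matrix.mulVec_sub]
  set d := x - y
  have hd : dist x y = ‖d‖ := dist_eq_norm x y
  rw [hd]
  rcases isEmpty_or_nonempty ι with h | h
  · simp [Subsingleton.elim (M.mulVec d) 0]
  · have hC : (0:ℝ) ≤ (∑ i, ∑ j, ‖M i j‖₊) * ‖d‖ :=
      mul_nonneg (by positivity) (norm_nonneg _)
    rw [pi_norm_le_iff_of_nonneg hC]
    intro i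
    calc ‖M.mulVec d i‖ = |∑ j, M i j * d j| := by
          simp [Matrix.mulVec, dotProduct, Real.norm_eq_abs]
      _ ≤ ∑ j, |M i j * d j| := Finset.abs_sum_le_sum_abs _ _
      _ ≤ ∑ j, |M i j| * ‖d‖ := by
          apply Finset.sum_le_sum
          intro j _
          rw [abs_mul]
          exact mul_le_mul_of_nonneg_left (norm_le_pi_norm d j) (abs_nonneg _)
      _ = (∑ j, |M i j|) * ‖d‖ := by rw [Finset.sum_mul]
      _ ≤ (∑ i, ∑ j, ‖M i j‖₊) * ‖d‖ := by
          apply mul_le_mul_of_nonneg_right _ (norm_nonneg _)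
          push_cast
          have : (∑ j, |M i j|) ≤ ∑ i', ∑ j, |M i' j| :=
            Finset.single_le_sum (f := fun i' => ∑ j, |M i' j|)
              (fun _ _ => Finset.sum_nonneg fun _ _ => abs_nonneg _) (Finset.mem_univ i)
          simpa [Real.norm_eq_abs] using this

/-- Uniqueness for linear ODEs `x' = M(t) x` with continuous coefficients. -/
lemma linear_ODE_unique (M : ℝ → Matrix ι ι ℝ)
    (hMc : ∀ i j, Continuous fun s => M s i j)
    (f g : ℝ → ι → ℝ)
    (hf : ∀ s, HasDerivAt f ((M s).mulVec (f s)) s)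
    (hg : ∀ s, HasDerivAt g ((M s).mulVec (g s)) s)
    (h0 : f 0 = g 0) : ∀ s, f s = g s := by
  intro s₀
  set a : ℝ := -(|s₀| + 1) with ha
  set b : ℝ := |s₀| + 1 with hb
  have hab : a < b := by
    have : (0:ℝ) < |s₀| + 1 := by positivity
    simp only [ha, hb]; linarith
  set π : ℝ → ℝ := fun t => max a (min b t) with hπ
  have hπc : Continuous π := continuous_const.max (continuous_const.min continuous_id)
  have hπeq : ∀ t ∈ Icc a b, π t = t := by
    intro t ht
    simp only [hπ]
    rw [min_eq_right ht.2, max_eq_right ht.1]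
  have hCc : Continuous fun t => ((∑ i, ∑ j, ‖M (π t) i j‖₊ : ℝ≥0) : ℝ) := by
    push_cast
    refine continuous_finset_sum _ fun i _ => continuous_finset_sum _ fun j _ => ?_
    simpa [Real.norm_eq_abs] using (((hMc i j).comp hπc).abs)
  obtain ⟨u, -, hu⟩ := isCompact_Icc.exists_isMaxOn (nonempty_Icc.2 hab.le)
    (hCc.continuousOn : ContinuousOn (fun t => ((∑ i, ∑ j, ‖M (π t) i j‖₊ : ℝ≥0) : ℝ)) (Icc a b))
  set K : ℝ≥0 := ∑ i, ∑ j, ‖M (π u) i j‖₊ with hK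
  have hlip : ∀ t, LipschitzOnWith K (fun x => (M (π t)).mulVec x) (univ : Set (ι → ℝ)) := by
    intro t
    have h1 : LipschitzWith (∑ i, ∑ j, ‖M (π t) i j‖₊) ((M (π t)).mulVec) :=
      mulVec_lipschitz _
    have h2 : (∑ i, ∑ j, ‖M (π t) i j‖₊) ≤ K := by
      have hmem : π t ∈ Icc a b := by
        constructor
        · exact le_max_left _ _
        · simp only [hπ]
          exact max_le hab.le (min_le_left _ _)
      have h3 : ((∑ i, ∑ j, ‖M (π (π t)) i j‖₊ : ℝ≥0) : ℝ)
          ≤ ((∑ i, ∑ j, ‖M (π u) i j‖₊ : ℝ≥0) : ℝ) := hu hmem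
      rw [hπeq (π t) hmem] at h3
      exact_mod_cast h3
    exact (h1.weaken h2).lipschitzOnWith
  have key : EqOn f g (Icc a b) := by
    apply ODE_solution_unique_of_mem_Icc (v := fun t x => (M (π t)).mulVec x)
      (s := fun _ => (univ : Set (ι → ℝ))) (fun t _ => hlip t) (t₀ := 0)
    · constructor
      · simp only [ha]; have : (0:ℝ) < |s₀| + 1 := by positivity
        simpa only [hb] using neg_lt_zero.2 this
      · simp only [hb]; positivity
    · exact (continuous_iff_continuousAt.2 fun x => (hf x).continuousAt).continuousOn
    · intro t ht
      have := hf t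
      rwa [hπeq t (Ioo_subset_Icc_self ht)]
    · intro t _; trivial
    · exact (continuous_iff_continuousAt.2 fun x => (hg x).continuousAt).continuousOn
    · intro t ht
      have := hg t
      rwa [hπeq t (Ioo_subset_Icc_self ht)]
    · intro t _; trivial
    · exact h0
  exact key ⟨by simp only [ha]; linarith [abs_nonneg s₀, neg_abs_le s₀],
    by simp only [hb]; linarith [le_abs_self s₀]⟩

/-- entrywise derivative of `P * X t * Q` for constant `P`, `Q`. -/
lemma hasDerivAt_const_mul_matrix (P Q : Matrix ι ι ℝ) (X : ℝ → Matrix ι ι ℝ)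
    (D : Matrix ι ι ℝ) (s : ℝ)
    (h : ∀ i j, HasDerivAt (fun t => X t i j) (D i j) s) (i j : ι) :
    HasDerivAt (fun t => (P * X t * Q) i j) ((P * D * Q) i j) s := by
  have key : ∀ t, (P * X t * Q) i j = ∑ l, (∑ k, P i k * X t k l) * Q l j := by
    intro t
    simp [Matrix.mul_apply]
  have key2 : (P * D * Q) i j = ∑ l, (∑ k, P i k * D k l) * Q l j := by
    simp [Matrix.mul_apply]
  rw [key2]
  have hsum : HasDerivAt (fun t => ∑ l, (∑ k, P i k * X t k l) * Q l j)
      (∑ l, (∑ k, P i k * D k l) * Q l j) s :=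
    HasDerivAt.fun_sum fun l _ =>
      (HasDerivAt.fun_sum fun k _ => (h k l).const_mul (P i k)).mul_const (Q l j)
  exact hsum.congr_of_eventuallyEq (Filter.Eventually.of_forall fun t => key t)

/-- continuity of entries of `P * A t * Q` from continuity of entries of `A`. -/
lemma continuous_const_mul_matrix (P Q : Matrix ι ι ℝ) (A : ℝ → Matrix ι ι ℝ)
    (hA : ∀ i j, Continuous fun s => A s i j) (i j : ι) :
    Continuous fun s => (P * A s * Q) i j := by
  have key : ∀ t, (P * A t * Q) i j = ∑ l, (∑ k, P i k * A t k l) * Q l j := by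
    intro t
    simp [Matrix.mul_apply]
  simp only [key]
  exact continuous_finset_sum _ fun l _ =>
    (continuous_finset_sum _ fun k _ => continuous_const.mul (hA k l)).mul continuous_const

end Helpers

section Hess
variable {ι : Type*} [Fintype ι] [DecidableEq ι]

/-- conjugation identity for the Hessian under a linear symmetry. -/
lemma hessM_conj (Ω : Set (ι → ℝ)) (hΩ : IsOpen Ω)
    (Γ : (ι → ℝ) → ℝ) (hΓ : ContDiffOn ℝ 2 Γ Ω)
    (S : Matrix ι ι ℝ) (hSS : S * Sᵀ = 1)
    (hSΩ : ∀ z ∈ Ω, S.mulVec z ∈ Ω)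
    (hSinv : ∀ z ∈ Ω, Γ (S.mulVec z) = Γ z)
    (z : ι → ℝ) (hz : z ∈ Ω) :
    hessM Γ (S.mulVec z) = S * hessM Γ z * Sᵀ := by
  classical
  set φ : (ι → ℝ) →L[ℝ] (ι → ℝ) := LinearMap.toContinuousLinearMap (Matrix.mulVecLin S) with hφ
  have hφap : ∀ w, φ w = S.mulVec w := fun w => rfl
  have hΓd : ∀ w ∈ Ω, DifferentiableAt ℝ Γ w := fun w hw =>
    ((hΓ.differentiableOn (by norm_num)) w hw).differentiableAt (hΩ.mem_nhds hw)
  have hfd : ContDiffOn ℝ 1 (fderiv ℝ Γ) Ω := hΓ.fderiv_of_isOpen hΩ (by norm_num)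
  have hpart : ∀ l : ι, ContDiffOn ℝ 1 (fun w => fderiv ℝ Γ w (Pi.single l 1)) Ω :=
    fun l => hfd.clm_apply contDiffOn_const
  have hpartd : ∀ (l : ι), ∀ w ∈ Ω, DifferentiableAt ℝ (fun w => fderiv ℝ Γ w (Pi.single l 1)) w :=
    fun l w hw => (((hpart l).differentiableOn one_ne_zero) w hw).differentiableAt (hΩ.mem_nhds hw)
  have hb : ∀ w ∈ Ω, ∀ v, fderiv ℝ Γ (S.mulVec w) (S.mulVec v) = fderiv ℝ Γ w v := by
    intro w hw v
    have hcomp : fderiv ℝ (Γ ∘ φ) w = (fderiv ℝ Γ (S.mulVec w)).comp (φ : (ι → ℝ) →L[ℝ] (ι → ℝ)) :=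
      ((hΓd _ (hSΩ w hw)).hasFDerivAt.comp w φ.hasFDerivAt).fderiv
    have hev : (Γ ∘ φ) =ᶠ[nhds w] Γ := by
      filter_upwards [hΩ.mem_nhds hw] with x hx
      exact hSinv x hx
    have := hev.fderiv_eq (𝕜 := ℝ)
    rw [this] at hcomp
    have := congrArg (fun L : (ι → ℝ) →L[ℝ] ℝ => L v) hcomp.symm
    simpa [hφap] using this
  have hST : ∀ l : ι, S.mulVec (Sᵀ.mulVec (Pi.single l 1)) = Pi.single l 1 := by
    intro l
    rw [Matrix.mulVec_mulVec, hSS, Matrix.one_mulVec]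
  have hc : ∀ w ∈ Ω, ∀ l, fderiv ℝ Γ (S.mulVec w) (Pi.single l 1)
      = ∑ m, S l m * fderiv ℝ Γ w (Pi.single m 1) := by
    intro w hw l
    have h1 : fderiv ℝ Γ (S.mulVec w) (Pi.single l 1)
        = fderiv ℝ Γ w (Sᵀ.mulVec (Pi.single l 1)) := by
      rw [← hST l, hb w hw]
      rw [hST l]
    rw [h1]
    have h2 : Sᵀ.mulVec (Pi.single l 1) = ∑ m, S l m • (Pi.single m 1 : ι → ℝ) := by
      ext q
      simp [Matrix.mulVec, dotProduct, Matrix.transpose_apply, Finset.sum_apply,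
        Pi.single_apply, mul_comm]
    rw [h2, map_sum]
    simp [smul_eq_mul]
  ext k l
  show fderiv ℝ (fun w => fderiv ℝ Γ w (Pi.single l 1)) (S.mulVec z) (Pi.single k 1)
      = (S * hessM Γ z * Sᵀ) k l
  set h : ι → (ι → ℝ) → ℝ := fun l w => fderiv ℝ Γ w (Pi.single l 1) with hh
  have hchain : fderiv ℝ (h l ∘ φ) z = (fderiv ℝ (h l) (S.mulVec z)).comp (φ : (ι → ℝ) →L[ℝ] (ι → ℝ)) :=
    ((hpartd l _ (hSΩ z hz)).hasFDerivAt.comp z φ.hasFDerivAt).fderiv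
  have hev2 : (h l ∘ φ) =ᶠ[nhds z] (fun w => ∑ m, S l m * h m w) := by
    filter_upwards [hΩ.mem_nhds hz] with x hx
    simpa [hh, Function.comp, hφap] using hc x hx l
  have hsumd : DifferentiableAt ℝ (fun w => ∑ m, S l m * h m w) z :=
    DifferentiableAt.fun_sum fun m _ => (hpartd m z hz).const_mul _
  have hder2 : fderiv ℝ (h l ∘ φ) z = fderiv ℝ (fun w => ∑ m, S l m * h m w) z :=
    hev2.fderiv_eq (𝕜 := ℝ)
  have hsum : fderiv ℝ (fun w => ∑ m, S l m * h m w) z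
      = ∑ m, S l m • fderiv ℝ (h m) z := by
    rw [fderiv_fun_sum (fun m _ => (hpartd m z hz).const_mul _)]
    congr 1
    ext m : 1
    exact fderiv_const_mul (hpartd m z hz) _
  have hkey : ∀ v, fderiv ℝ (h l) (S.mulVec z) (S.mulVec v)
      = ∑ m, S l m * fderiv ℝ (h m) z v := by
    intro v
    have := congrArg (fun L : (ι → ℝ) →L[ℝ] ℝ => L v) (hchain.symm.trans (hder2.trans hsum))
    simpa [hφap, ContinuousLinearMap.sum_apply, smul_eq_mul] using this
  have := hkey (Sᵀ.mulVec (Pi.single k 1))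
  rw [hST k] at this
  rw [this]
  have h2 : Sᵀ.mulVec (Pi.single k 1) = ∑ p, S k p • (Pi.single p 1 : ι → ℝ) := by
    ext q
    simp [Matrix.mulVec, dotProduct, Matrix.transpose_apply, Finset.sum_apply,
      Pi.single_apply, mul_comm]
  have h3 : ∀ m, fderiv ℝ (h m) z (Sᵀ.mulVec (Pi.single k 1))
      = ∑ p, S k p * fderiv ℝ (h m) z (Pi.single p 1) := by
    intro m
    rw [h2, map_sum]
    simp [smul_eq_mul]
  simp only [h3]
  rw [Matrix.mul_apply]
  simp only [Matrix.mul_apply, Matrix.transpose_apply, hessM, Matrix.of_apply, hh]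
  exact Finset.sum_congr rfl fun x _ => mul_comm _ _

/-- continuity of entries of the Hessian on an open set where `Γ` is `C²`. -/
lemma hessM_entry_continuousOn (Ω : Set (ι → ℝ)) (hΩ : IsOpen Ω)
    (Γ : (ι → ℝ) → ℝ) (hΓ : ContDiffOn ℝ 2 Γ Ω) (i j : ι) :
    ContinuousOn (fun z => hessM Γ z i j) Ω := by
  have hfd : ContDiffOn ℝ 1 (fderiv ℝ Γ) Ω := hΓ.fderiv_of_isOpen hΩ (by norm_num)
  have hpart : ContDiffOn ℝ 1 (fun w => fderiv ℝ Γ w (Pi.single j 1)) Ω :=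
    hfd.clm_apply contDiffOn_const
  have h1 : ContinuousOn (fderiv ℝ (fun w => fderiv ℝ Γ w (Pi.single j 1))) Ω :=
    hpart.continuousOn_fderiv_of_isOpen hΩ le_rfl
  exact h1.clm_apply continuousOn_const

end Hess

/-- Roberts' time-reversing symmetry lemma: if `γ` is a `T`-periodic solution of
`z' = J∇Γ(z)` with time-reversing symmetry `S` (orthogonal, `Γ∘S = Γ`,
`SJ = −JS`, `γ(−s + T/N) = Sγ(s)`), and `X` is the fundamental matrix solution
of the linearization `ξ' = JD²Γ(γ(s))ξ`, `X(0) = I`, then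
`X(−s + T/N) = S X(s) Sᵀ X(T/N)` for all `s`. -/
theorem roberts_time_reversing_lemma (n : ℕ)
    (Ω : Set ((Fin n ⊕ Fin n) → ℝ)) (hΩ : IsOpen Ω)
    (Γ : ((Fin n ⊕ Fin n) → ℝ) → ℝ) (hΓ : ContDiffOn ℝ 2 Γ Ω)
    (T : ℝ) (hT : 0 < T)
    (γ : ℝ → (Fin n ⊕ Fin n) → ℝ) (hmem : ∀ s, γ s ∈ Ω)
    (hsol : ∀ s : ℝ, HasDerivAt γ ((Jmat n).mulVec (grad Γ (γ s))) s)
    (hper : Function.Periodic γ T)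
    (S : Matrix (Fin n ⊕ Fin n) (Fin n ⊕ Fin n) ℝ)
    (hSorth : Sᵀ * S = 1)
    (N : ℕ) (hN : 0 < N)
    (hsymm : ∀ s : ℝ, γ (-s + T / (N : ℝ)) = S.mulVec (γ s))
    (hSΩ : S.mulVec '' Ω = Ω)
    (hSinv : ∀ z ∈ Ω, Γ (S.mulVec z) = Γ z)
    (hSJ : S * Jmat n = -(Jmat n * S))
    (X : ℝ → Matrix (Fin n ⊕ Fin n) (Fin n ⊕ Fin n) ℝ)
    (hX0 : X 0 = 1)
    (hX : ∀ (s : ℝ) (i j : Fin n ⊕ Fin n),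
      HasDerivAt (fun t => X t i j) ((Jmat n * hessM Γ (γ s) * X s) i j) s) :
    ∀ s : ℝ, X (-s + T / (N : ℝ)) = S * X s * Sᵀ * X (T / (N : ℝ)) := by
  classical
  set c : ℝ := T / (N : ℝ) with hc
  have hγc : Continuous γ := continuous_iff_continuousAt.2 fun s => (hsol s).continuousAt
  have hSST : S * Sᵀ = 1 := mul_eq_one_comm.mp hSorth
  have hSΩ' : ∀ z ∈ Ω, S.mulVec z ∈ Ω := fun z hz => by
    rw [← hSΩ]; exact Set.mem_image_of_mem _ hz
  have hJS : Jmat n * S = -(S * Jmat n) := by rw [hSJ, neg_neg]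
  have hessA : ∀ s, hessM Γ (γ (-s + c)) = S * hessM Γ (γ s) * Sᵀ := fun s => by
    rw [hsymm s]; exact hessM_conj Ω hΩ Γ hΓ S hSST hSΩ' hSinv (γ s) (hmem s)
  have hAc : ∀ k l, Continuous fun s => hessM Γ (γ s) k l := fun k l =>
    (hessM_entry_continuousOn Ω hΩ Γ hΓ k l).comp_continuous hγc hmem
  set M : ℝ → Matrix (Fin n ⊕ Fin n) (Fin n ⊕ Fin n) ℝ :=
    fun s => S * (Jmat n * hessM Γ (γ s)) * Sᵀ with hM
  have hMc : ∀ i j, Continuous fun s => M s i j := by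
    intro i j
    apply continuous_const_mul_matrix
    intro k l
    have := continuous_const_mul_matrix (Jmat n) 1 (fun s => hessM Γ (γ s)) hAc k l
    simpa using this
  have hBneg : ∀ s, Jmat n * hessM Γ (γ (-s + c)) = -(M s) := by
    intro s
    rw [hessA s, hM]
    have h1 : Jmat n * (S * hessM Γ (γ s) * Sᵀ)
        = (Jmat n * S) * (hessM Γ (γ s) * Sᵀ) := by noncomm_ring
    rw [h1, hJS]
    noncomm_ring
  have main : ∀ j s, (fun i => X (-s + c) i j) = fun i => (S * X s * Sᵀ * X c) i j := by
    intro j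
    apply linear_ODE_unique M hMc
    · -- derivative of the left column function
      intro s
      rw [hasDerivAt_pi]
      intro i
      have hρ : HasDerivAt (fun t : ℝ => -t + c) (-1) s := (hasDerivAt_id s).neg.add_const c
      have hcomp := (hX (-s + c) i j).comp s hρ
      have hval : ((M s).mulVec (fun k => X (-s + c) k j)) i
          = (Jmat n * hessM Γ (γ (-s + c)) * X (-s + c)) i j * (-1) := by
        have h1 : Jmat n * hessM Γ (γ (-s + c)) * X (-s + c) = -(M s * X (-s + c)) := by
          rw [hBneg s]; noncomm_ring
        rw [h1]
        simp [Matrix.mul_apply, Matrix.mulVec, dotProduct]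
      rw [hval]
      exact hcomp
    · -- derivative of the right column function
      intro s
      rw [hasDerivAt_pi]
      intro i
      have hD := hasDerivAt_const_mul_matrix S (Sᵀ * X c) X
        (Jmat n * hessM Γ (γ s) * X s) s (hX s) i j
      have hfun : ∀ t, (S * X t * (Sᵀ * X c)) i j = (S * X t * Sᵀ * X c) i j := by
        intro t; rw [mul_assoc (S * X t) Sᵀ (X c)]
      have hval : ((M s).mulVec (fun k => (S * X s * Sᵀ * X c) k j)) i
          = (S * (Jmat n * hessM Γ (γ s) * X s) * (Sᵀ * X c)) i j := by
        have h1 : M s * (S * X s * Sᵀ * X c)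
            = S * (Jmat n * hessM Γ (γ s) * X s) * (Sᵀ * X c) := by
          have h2 : M s * (S * X s * Sᵀ * X c)
              = S * (Jmat n * hessM Γ (γ s)) * (Sᵀ * S) * (X s * (Sᵀ * X c)) := by
            rw [hM]; noncomm_ring
          rw [h2, hSorth, mul_one]
          noncomm_ring
        rw [← h1]
        simp [Matrix.mul_apply, Matrix.mulVec, dotProduct]
      rw [hval]
      exact hD.congr_of_eventuallyEq (Filter.Eventually.of_forall fun t => (hfun t).symm)
    · -- initial condition
      funext i
      have : (-(0:ℝ) + c) = c := by ring
      rw [this, hX0, mul_one, hSST, one_mul]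
  intro s
  ext i j
  exact congrFun (main j s) i
end
end

section
/- Under the hypotheses of Roberts' time-reversing symmetry lemma — γ a T-periodic solution of z' = J∇Γ(z) with Γ C², S orthogonal, Γ∘S = Γ, SJ = −JS, γ(−s + T/N) = Sγ(s) for all s — let Y₀ be an invertible 2n×2n matrix and Y(s) the solution of ξ' = JD²Γ(γ(s))ξ with Y(0) = Y₀. Then Y(−s + T/N) = S Y(s) Y₀⁻¹ Sᵀ Y(T/N) for all s, and Y(T/N) = S Y₀ B⁻¹ Sᵀ B where B = Y(T/2N) (assumed invertible). -/
open Matrix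

noncomputable section

namespace RobertsAux

variable {ι : Type*} [Fintype ι] [DecidableEq ι]
variable {Ω : Set (ι → ℝ)} {Γ : (ι → ℝ) → ℝ} {S : Matrix ι ι ℝ}

lemma hessM_eq_fderiv2 (f : (ι → ℝ) → ℝ) (z : ι → ℝ)
    (h : DifferentiableAt ℝ (fderiv ℝ f) z) (i j : ι) :
    hessM f z i j = fderiv ℝ (fderiv ℝ f) z (Pi.single i 1) (Pi.single j 1) := by
  have h2 : fderiv ℝ (fun w => fderiv ℝ f w (Pi.single j 1)) z
      = (fderiv ℝ (fderiv ℝ f) z).flip (Pi.single j 1) := by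
    have := fderiv_clm_apply (c := fderiv ℝ f) (u := fun _ => (Pi.single j 1 : ι → ℝ))
      h (differentiableAt_const _)
    simpa using this
  show fderiv ℝ (fun w => fderiv ℝ f w (Pi.single j 1)) z (Pi.single i 1) = _
  rw [h2]; rfl

lemma fderiv_diffAt (hΩ : IsOpen Ω) (hΓ : ContDiffOn ℝ 2 Γ Ω) {z : ι → ℝ} (hz : z ∈ Ω) :
    DifferentiableAt ℝ (fderiv ℝ Γ) z := by
  have h1 : ContDiffOn ℝ 1 (fderiv ℝ Γ) Ω := hΓ.fderiv_of_isOpen hΩ (by norm_num)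
  exact (h1.differentiableOn one_ne_zero).differentiableAt (hΩ.mem_nhds hz)

lemma hessM_symm (hΩ : IsOpen Ω) (hΓ : ContDiffOn ℝ 2 Γ Ω) {z : ι → ℝ} (hz : z ∈ Ω) :
    (hessM Γ z)ᵀ = hessM Γ z := by
  ext i j
  rw [transpose_apply, hessM_eq_fderiv2 _ _ (fderiv_diffAt hΩ hΓ hz),
    hessM_eq_fderiv2 _ _ (fderiv_diffAt hΩ hΓ hz)]
  have hf : ∀ᶠ y in nhds z, HasFDerivAt Γ (fderiv ℝ Γ y) y := by
    filter_upwards [hΩ.mem_nhds hz] with y hy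
    exact ((hΓ.differentiableOn (by norm_num)).differentiableAt (hΩ.mem_nhds hy)).hasFDerivAt
  exact second_derivative_symmetric_of_eventually hf
    (fderiv_diffAt hΩ hΓ hz).hasFDerivAt _ _

lemma fderiv2_mulVec (hΩ : IsOpen Ω) (hΓ : ContDiffOn ℝ 2 Γ Ω)
    (hSΩ : ∀ z ∈ Ω, S.mulVec z ∈ Ω) (hSinv : ∀ z ∈ Ω, Γ (S.mulVec z) = Γ z)
    {z : ι → ℝ} (hz : z ∈ Ω) (v w : ι → ℝ) :
    fderiv ℝ (fderiv ℝ Γ) z v w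
      = fderiv ℝ (fderiv ℝ Γ) (S.mulVec z) (S.mulVec v) (S.mulVec w) := by
  set L : (ι → ℝ) →L[ℝ] (ι → ℝ) := LinearMap.toContinuousLinearMap (Matrix.mulVecLin S) with hL
  have hLapp : ∀ u, L u = S.mulVec u := fun u => by simp [hL]
  have hdΓ : ∀ u ∈ Ω, DifferentiableAt ℝ Γ u := fun u hu =>
    (hΓ.differentiableOn (by norm_num)).differentiableAt (hΩ.mem_nhds hu)
  have key1 : ∀ u ∈ Ω, fderiv ℝ Γ u = (fderiv ℝ Γ (L u)).comp L := by
    intro u hu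
    have hev : Γ =ᶠ[nhds u] (Γ ∘ L) := by
      filter_upwards [hΩ.mem_nhds hu] with y hy
      simp [Function.comp, hLapp, hSinv y hy]
    rw [hev.fderiv_eq]
    rw [fderiv_comp u (by rw [hLapp]; exact hdΓ _ (hSΩ u hu)) L.differentiableAt, L.fderiv]
  set g := fderiv ℝ Γ with hg
  set ψ : ((ι → ℝ) →L[ℝ] ℝ) →L[ℝ] ((ι → ℝ) →L[ℝ] ℝ) :=
    (ContinuousLinearMap.compL ℝ (ι → ℝ) (ι → ℝ) ℝ).flip L with hψ
  have hψapp : ∀ M u, ψ M u = M (L u) := fun M u => rfl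
  have hev2 : g =ᶠ[nhds z] fun u => ψ (g (L u)) := by
    filter_upwards [hΩ.mem_nhds hz] with y hy
    rw [key1 y hy]; rfl
  have hdgL : DifferentiableAt ℝ g (L z) := by
    rw [hLapp]; exact fderiv_diffAt hΩ hΓ (hSΩ z hz)
  have hdcomp : DifferentiableAt ℝ (fun u => g (L u)) z :=
    (hdgL.comp z L.differentiableAt)
  have step2 : fderiv ℝ g z = ψ.comp ((fderiv ℝ g (L z)).comp L) := by
    rw [hev2.fderiv_eq]
    have e1 : (fun u => ψ (g (L u))) = ψ ∘ (fun u => g (L u)) := rfl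
    have e2 : (fun u => g (L u)) = g ∘ ⇑L := rfl
    rw [e1, fderiv_comp z ψ.differentiableAt hdcomp, ψ.fderiv, e2,
      fderiv_comp z hdgL L.differentiableAt, L.fderiv]
  show fderiv ℝ g z v w = fderiv ℝ g (S.mulVec z) (S.mulVec v) (S.mulVec w)
  rw [step2]
  simp only [ContinuousLinearMap.comp_apply]
  rw [hψapp, hLapp, hLapp, hLapp]

lemma hessM_mulVec (hΩ : IsOpen Ω) (hΓ : ContDiffOn ℝ 2 Γ Ω)
    (hSΩ : ∀ z ∈ Ω, S.mulVec z ∈ Ω) (hSinv : ∀ z ∈ Ω, Γ (S.mulVec z) = Γ z)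
    (hSS : S * Sᵀ = 1) {z : ι → ℝ} (hz : z ∈ Ω) :
    hessM Γ (S.mulVec z) = S * hessM Γ z * Sᵀ := by
  set φ := fderiv ℝ (fderiv ℝ Γ) (S.mulVec z) with hφ
  have hvec : ∀ i : ι, (Pi.single i 1 : ι → ℝ) = ∑ k, S i k • S.mulVec (Pi.single k 1) := by
    intro i; funext m
    have hms : ∀ k, S.mulVec (Pi.single k (1:ℝ)) = fun r => S r k * 1 := fun k =>
      Matrix.mulVec_single _ _ _
    simp only [Finset.sum_apply, Pi.smul_apply, hms, smul_eq_mul, mul_one]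
    have h1 : ∑ k, S i k * S m k = (S * Sᵀ) i m := by
      simp [Matrix.mul_apply]
    rw [h1, hSS, Matrix.one_apply, Pi.single_apply]
    simp [eq_comm]
  ext i j
  rw [hessM_eq_fderiv2 _ _ (fderiv_diffAt hΩ hΓ (hSΩ z hz)), ← hφ]
  have hentry : ∀ k l, hessM Γ z k l
      = φ (S.mulVec (Pi.single k 1)) (S.mulVec (Pi.single l 1)) := by
    intro k l
    rw [hessM_eq_fderiv2 _ _ (fderiv_diffAt hΩ hΓ hz),
      fderiv2_mulVec hΩ hΓ hSΩ hSinv hz, ← hφ]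
  have hL : φ (Pi.single i 1) (Pi.single j 1)
      = ∑ k, ∑ l, S i k * (S j l * φ (S.mulVec (Pi.single k 1)) (S.mulVec (Pi.single l 1))) := by
    rw [hvec i, hvec j]
    simp only [_root_.map_smul, map_sum, ContinuousLinearMap.sum_apply,
      ContinuousLinearMap.smul_apply, ContinuousLinearMap.coe_sum', Finset.sum_apply,
      smul_eq_mul, Finset.mul_sum]
    rw [Finset.sum_comm]
    exact Finset.sum_congr rfl fun k _ => Finset.sum_congr rfl fun l _ => by ring
  rw [hL]
  simp only [Matrix.mul_apply, hentry, Matrix.transpose_apply, Finset.sum_mul, Finset.mul_sum]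
  rw [Finset.sum_comm]
  exact Finset.sum_congr rfl fun k _ => Finset.sum_congr rfl fun l _ => by ring

lemma hasDerivAt_matrix_mul {m : Type*} [Fintype m] {P Q : ℝ → Matrix m m ℝ}
    {P' Q' : Matrix m m ℝ} {s : ℝ}
    (hP : ∀ i j, HasDerivAt (fun t => P t i j) (P' i j) s)
    (hQ : ∀ i j, HasDerivAt (fun t => Q t i j) (Q' i j) s) (i j : m) :
    HasDerivAt (fun t => (P t * Q t) i j) ((P' * Q s + P s * Q') i j) s := by
  have h1 : (fun t => (P t * Q t) i j) = fun t => ∑ k, P t i k * Q t k j := by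
    funext t; exact Matrix.mul_apply
  have h2 : (P' * Q s + P s * Q') i j = ∑ k, (P' i k * Q s k j + P s i k * Q' k j) := by
    simp [Matrix.mul_apply, Matrix.add_apply, Finset.sum_add_distrib]
  rw [h1, h2]
  exact HasDerivAt.fun_sum fun k _ => (hP i k).mul (hQ k j)

lemma matrix_const_of_deriv_zero {m : Type*} [Fintype m] {F : ℝ → Matrix m m ℝ}
    (h : ∀ s (i j : m), HasDerivAt (fun t => F t i j) 0 s) (a b : ℝ) : F a = F b := by
  ext i j
  exact is_const_of_deriv_eq_zero (fun t => (h t i j).differentiableAt)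
    (fun t => (h t i j).deriv) a b

lemma key_zero {m : Type*} [Fintype m] [DecidableEq m] (Y₁ Y₂ H J S : Matrix m m ℝ)
    (hH : Hᵀ = H) (hJt : Jᵀ = -J) (hJJ : J * J = -1)
    (hStJ : Sᵀ * J = -(J * Sᵀ)) (hStS : Sᵀ * S = 1) :
    (J * H * Y₁)ᵀ * (J * Sᵀ) * Y₂
      + Y₁ᵀ * (J * Sᵀ) * (-(J * (S * H * Sᵀ) * Y₂)) = 0 := by
  have hJJ' : ∀ X : Matrix m m ℝ, J * (J * X) = -X := fun X => by
    rw [← Matrix.mul_assoc, hJJ, Matrix.neg_mul, Matrix.one_mul]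
  have hStJ' : ∀ X : Matrix m m ℝ, Sᵀ * (J * X) = -(J * (Sᵀ * X)) := fun X => by
    rw [← Matrix.mul_assoc, hStJ, Matrix.neg_mul, Matrix.mul_assoc]
  have hStS' : ∀ X : Matrix m m ℝ, Sᵀ * (S * X) = X := fun X => by
    rw [← Matrix.mul_assoc, hStS, Matrix.one_mul]
  simp only [Matrix.transpose_mul, hH, hJt, Matrix.mul_assoc, Matrix.neg_mul,
    Matrix.mul_neg, neg_neg, hJJ', hStJ', hStS']
  abel

lemma key_zero2 {m : Type*} [Fintype m] [DecidableEq m] (Y₁ H J : Matrix m m ℝ)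
    (hH : Hᵀ = H) (hJt : Jᵀ = -J) (hJJ : J * J = -1) :
    (J * H * Y₁)ᵀ * J * Y₁ + Y₁ᵀ * J * (J * H * Y₁) = 0 := by
  have hJJ' : ∀ X : Matrix m m ℝ, J * (J * X) = -X := fun X => by
    rw [← Matrix.mul_assoc, hJJ, Matrix.neg_mul, Matrix.one_mul]
  simp only [Matrix.transpose_mul, hH, hJt, Matrix.mul_assoc, Matrix.neg_mul,
    Matrix.mul_neg, neg_neg, hJJ']
  abel

end RobertsAux

open RobertsAux in
/-- Roberts' time-reversing symmetry lemma: if `γ` is a `T`-periodic solution of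
`z' = J∇Γ(z)` with time-reversing symmetry `S` (orthogonal, `Γ∘S = Γ`,
`SJ = −JS`, `γ(−s + T/N) = Sγ(s)`), and `X` is the fundamental matrix solution
of the linearization `ξ' = JD²Γ(γ(s))ξ` with invertible initial condition
`Y(0) = Y₀`, then `Y(−s + T/N) = S Y(s) Y₀⁻¹ Sᵀ Y(T/N)` for all `s`, and
`Y(T/N) = S Y₀ B⁻¹ Sᵀ B` where `B = Y(T/2N)` (assumed invertible). -/
theorem roberts_factorization_Y (n : ℕ)
    (Ω : Set ((Fin n ⊕ Fin n) → ℝ)) (hΩ : IsOpen Ω)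
    (Γ : ((Fin n ⊕ Fin n) → ℝ) → ℝ) (hΓ : ContDiffOn ℝ 2 Γ Ω)
    (T : ℝ) (hT : 0 < T)
    (γ : ℝ → (Fin n ⊕ Fin n) → ℝ) (hmem : ∀ s, γ s ∈ Ω)
    (hsol : ∀ s : ℝ, HasDerivAt γ ((Jmat n).mulVec (grad Γ (γ s))) s)
    (hper : Function.Periodic γ T)
    (S : Matrix (Fin n ⊕ Fin n) (Fin n ⊕ Fin n) ℝ)
    (hSorth : Sᵀ * S = 1)
    (N : ℕ) (hN : 0 < N)
    (hsymm : ∀ s : ℝ, γ (-s + T / (N : ℝ)) = S.mulVec (γ s))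
    (hSΩ : S.mulVec '' Ω = Ω)
    (hSinv : ∀ z ∈ Ω, Γ (S.mulVec z) = Γ z)
    (hSJ : S * Jmat n = -(Jmat n * S))
    (Y₀ : Matrix (Fin n ⊕ Fin n) (Fin n ⊕ Fin n) ℝ) (hY₀ : IsUnit Y₀)
    (Y : ℝ → Matrix (Fin n ⊕ Fin n) (Fin n ⊕ Fin n) ℝ)
    (hY0 : Y 0 = Y₀)
    (hY : ∀ (s : ℝ) (i j : Fin n ⊕ Fin n),
      HasDerivAt (fun t => Y t i j) ((Jmat n * hessM Γ (γ s) * Y s) i j) s)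
    (hB : IsUnit (Y (T / (2 * (N : ℝ))))) :
    (∀ s : ℝ, Y (-s + T / (N : ℝ)) = S * Y s * Y₀⁻¹ * Sᵀ * Y (T / (N : ℝ))) ∧
    Y (T / (N : ℝ)) =
      S * Y₀ * (Y (T / (2 * (N : ℝ))))⁻¹ * Sᵀ * Y (T / (2 * (N : ℝ))) := by
  have hNne : (N : ℝ) ≠ 0 := Nat.cast_ne_zero.mpr hN.ne'
  set c := T / (N : ℝ) with hc
  set Jm := Jmat n with hJm
  -- basic matrix facts
  have hJt : Jmᵀ = -Jm := by
    rw [hJm, Jmat, Matrix.fromBlocks_transpose, Matrix.fromBlocks_neg]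
    simp
  have hJJ : Jm * Jm = -1 := by
    rw [hJm, Jmat, Matrix.fromBlocks_multiply, ← Matrix.fromBlocks_one,
      Matrix.fromBlocks_neg]
    simp
  have hSS : S * Sᵀ = 1 := mul_eq_one_comm.mp hSorth
  have hStJ : Sᵀ * Jm = -(Jm * Sᵀ) := by
    have h := congrArg Matrix.transpose hSJ
    simp only [Matrix.transpose_mul, Matrix.transpose_neg, hJt, Matrix.neg_mul,
      Matrix.mul_neg, neg_neg] at h
    exact h.symm
  have hSmem : ∀ z ∈ Ω, S.mulVec z ∈ Ω := fun z hz => by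
    rw [← hSΩ]; exact ⟨z, hz, rfl⟩
  have hHsym : ∀ s : ℝ, (hessM Γ (γ s))ᵀ = hessM Γ (γ s) := fun s =>
    hessM_symm hΩ hΓ (hmem s)
  have hHrev : ∀ s : ℝ, hessM Γ (γ (-s + c)) = S * hessM Γ (γ s) * Sᵀ := fun s => by
    rw [hsymm s, hessM_mulVec hΩ hΓ hSmem hSinv hSS (hmem s)]
  -- derivative of the transpose of Y
  have hYt : ∀ (s : ℝ) (i j : Fin n ⊕ Fin n),
      HasDerivAt (fun t => (Y t)ᵀ i j) ((Jm * hessM Γ (γ s) * Y s)ᵀ i j) s := by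
    intro s i j
    simpa [Matrix.transpose_apply] using hY s j i
  -- derivative of the reflected solution
  have hYrev : ∀ (s : ℝ) (i j : Fin n ⊕ Fin n),
      HasDerivAt (fun t => Y (-t + c) i j)
        ((-(Jm * (S * hessM Γ (γ s) * Sᵀ) * Y (-s + c))) i j) s := by
    intro s i j
    have hlin : HasDerivAt (fun t : ℝ => -t + c) (-1) s := by
      simpa using ((hasDerivAt_id s).neg.add_const c)
    have h0 := (hY (-s + c) i j).comp s hlin
    have heq : (Jm * hessM Γ (γ (-s + c)) * Y (-s + c)) i j * (-1)
        = (-(Jm * (S * hessM Γ (γ s) * Sᵀ) * Y (-s + c))) i j := by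
      rw [hHrev s]; simp [Matrix.neg_apply]
    rw [heq] at h0
    exact h0
  -- first conserved quantity : Yᵀ Jm Y
  have hGconst : ∀ s : ℝ, (Y s)ᵀ * Jm * Y s = Y₀ᵀ * Jm * Y₀ := by
    intro s
    have hder : ∀ (u : ℝ) (i j : Fin n ⊕ Fin n),
        HasDerivAt (fun t => ((Y t)ᵀ * Jm * Y t) i j) 0 u := by
      intro u i j
      have hconst : ∀ i j : Fin n ⊕ Fin n,
          HasDerivAt (fun _ : ℝ => Jm i j) ((0 : Matrix _ _ ℝ) i j) u := by
        intro i j; simpa using hasDerivAt_const u (Jm i j)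
      have h1 := hasDerivAt_matrix_mul (P := fun t => (Y t)ᵀ) (Q := fun _ => Jm)
        (hYt u) hconst
      have h2 := hasDerivAt_matrix_mul (P := fun t => (Y t)ᵀ * Jm) (Q := Y)
        h1 (hY u) i j
      have hz : ((Jm * hessM Γ (γ u) * Y u)ᵀ * Jm + (Y u)ᵀ * 0) * Y u
          + ((Y u)ᵀ * Jm) * (Jm * hessM Γ (γ u) * Y u) = 0 := by
        rw [Matrix.mul_zero, add_zero]
        exact key_zero2 (Y u) (hessM Γ (γ u)) Jm (hHsym u) hJt hJJ
      rw [hz] at h2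
      simpa using h2
    have := matrix_const_of_deriv_zero hder s 0
    rwa [hY0] at this
  -- invertibility of Y s
  have hJunit : IsUnit Jm := by
    refine ⟨⟨Jm, -Jm, ?_, ?_⟩, rfl⟩
    · show Jm * -Jm = 1
      rw [mul_neg, hJJ, neg_neg]
    · show -Jm * Jm = 1
      rw [neg_mul, hJJ, neg_neg]
  have hKunit : IsUnit (Y₀ᵀ * Jm * Y₀) := by
    rw [Matrix.isUnit_iff_isUnit_det]
    simp only [Matrix.det_mul, Matrix.det_transpose]
    exact (((Matrix.isUnit_iff_isUnit_det _).mp hY₀).mul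
      ((Matrix.isUnit_iff_isUnit_det _).mp hJunit)).mul
      ((Matrix.isUnit_iff_isUnit_det _).mp hY₀)
  set K := Y₀ᵀ * Jm * Y₀ with hK
  have hKdet : IsUnit K.det := (Matrix.isUnit_iff_isUnit_det K).mp hKunit
  have hYunit : ∀ s : ℝ, IsUnit (Y s) := by
    intro s
    rw [Matrix.isUnit_iff_isUnit_det]
    have hdet : (Y s).det * (Jm.det * (Y s).det) = K.det := by
      rw [← hGconst s]
      simp only [Matrix.det_mul, Matrix.det_transpose]; ring
    have hKd : IsUnit ((Y s).det * (Jm.det * (Y s).det)) := hdet ▸ hKdet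
    exact isUnit_of_mul_isUnit_left hKd
  have hYdet : ∀ s : ℝ, IsUnit (Y s).det := fun s =>
    (Matrix.isUnit_iff_isUnit_det _).mp (hYunit s)
  have hYinv : ∀ s : ℝ, (Y s)⁻¹ = K⁻¹ * (Y s)ᵀ * Jm := by
    intro s
    refine Matrix.inv_eq_left_inv ?_
    calc K⁻¹ * (Y s)ᵀ * Jm * Y s = K⁻¹ * ((Y s)ᵀ * Jm * Y s) := by
          simp only [Matrix.mul_assoc]
      _ = K⁻¹ * K := by rw [hGconst s]
      _ = 1 := Matrix.nonsing_inv_mul K hKdet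
  have hY0inv : Y₀⁻¹ = K⁻¹ * Y₀ᵀ * Jm := by
    have h := hYinv 0
    rwa [hY0] at h
  -- second conserved quantity : Yᵀ (Jm Sᵀ) Y(-s+c)
  have hFconst : ∀ s : ℝ,
      (Y s)ᵀ * (Jm * Sᵀ) * Y (-s + c) = Y₀ᵀ * (Jm * Sᵀ) * Y c := by
    intro s
    have hder : ∀ (u : ℝ) (i j : Fin n ⊕ Fin n),
        HasDerivAt (fun t => ((Y t)ᵀ * (Jm * Sᵀ) * Y (-t + c)) i j) 0 u := by
      intro u i j
      have hconst : ∀ i j : Fin n ⊕ Fin n,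
          HasDerivAt (fun _ : ℝ => (Jm * Sᵀ) i j) ((0 : Matrix _ _ ℝ) i j) u := by
        intro i j; simpa using hasDerivAt_const u ((Jm * Sᵀ) i j)
      have h1 := hasDerivAt_matrix_mul (P := fun t => (Y t)ᵀ) (Q := fun _ => Jm * Sᵀ)
        (hYt u) hconst
      have h2 := hasDerivAt_matrix_mul (P := fun t => (Y t)ᵀ * (Jm * Sᵀ))
        (Q := fun t => Y (-t + c)) h1 (hYrev u) i j
      have hz : ((Jm * hessM Γ (γ u) * Y u)ᵀ * (Jm * Sᵀ) + (Y u)ᵀ * 0) * Y (-u + c)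
          + ((Y u)ᵀ * (Jm * Sᵀ)) * (-(Jm * (S * hessM Γ (γ u) * Sᵀ) * Y (-u + c))) = 0 := by
        rw [Matrix.mul_zero, add_zero]
        exact key_zero (Y u) (Y (-u + c)) (hessM Γ (γ u)) Jm S (hHsym u) hJt hJJ hStJ hSorth
      rw [hz] at h2
      simpa using h2
    have := matrix_const_of_deriv_zero hder s 0
    rwa [hY0, neg_zero, zero_add] at this
  -- main identity (statement 1)
  have main : ∀ s : ℝ, Y (-s + c) = S * Y s * Y₀⁻¹ * Sᵀ * Y c := by
    intro s
    have h' : (Y s)ᵀ * (Jm * (Sᵀ * Y (-s + c))) = Y₀ᵀ * (Jm * (Sᵀ * Y c)) := by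
      simpa only [Matrix.mul_assoc] using hFconst s
    have hu : Sᵀ * Y (-s + c) = Y s * (Y₀⁻¹ * (Sᵀ * Y c)) := by
      calc Sᵀ * Y (-s + c)
          = Y s * ((Y s)⁻¹ * (Sᵀ * Y (-s + c))) := by
            rw [← Matrix.mul_assoc, Matrix.mul_nonsing_inv _ (hYdet s), Matrix.one_mul]
        _ = Y s * (K⁻¹ * ((Y s)ᵀ * (Jm * (Sᵀ * Y (-s + c))))) := by
            rw [hYinv s]; simp only [Matrix.mul_assoc]
        _ = Y s * (K⁻¹ * (Y₀ᵀ * (Jm * (Sᵀ * Y c)))) := by rw [h']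
        _ = Y s * (Y₀⁻¹ * (Sᵀ * Y c)) := by
            rw [hY0inv]; simp only [Matrix.mul_assoc]
    have hfin : S * (Sᵀ * Y (-s + c)) = Y (-s + c) := by
      rw [← Matrix.mul_assoc, hSS, Matrix.one_mul]
    rw [← hfin, hu]
    simp only [Matrix.mul_assoc]
  refine ⟨main, ?_⟩
  -- statement 2
  set b := T / (2 * (N : ℝ)) with hb
  have hbc : -b + c = b := by
    rw [hb, hc]; field_simp; ring
  have h2 : Y b = S * Y b * Y₀⁻¹ * Sᵀ * Y c := by
    have := main b
    rwa [hbc] at this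
  have hBdet : IsUnit (Y b).det := (Matrix.isUnit_iff_isUnit_det _).mp hB
  have hY₀det : IsUnit Y₀.det := (Matrix.isUnit_iff_isUnit_det _).mp hY₀
  have hMN : (S * Y₀ * (Y b)⁻¹ * Sᵀ) * (S * Y b * Y₀⁻¹ * Sᵀ) = 1 := by
    have hcSt : ∀ X : Matrix (Fin n ⊕ Fin n) (Fin n ⊕ Fin n) ℝ, Sᵀ * (S * X) = X := by
      intro X; rw [← Matrix.mul_assoc, hSorth, Matrix.one_mul]
    have hcB : ∀ X : Matrix (Fin n ⊕ Fin n) (Fin n ⊕ Fin n) ℝ,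
        (Y b)⁻¹ * (Y b * X) = X := by
      intro X; rw [← Matrix.mul_assoc, Matrix.nonsing_inv_mul _ hBdet, Matrix.one_mul]
    have hcY₀ : ∀ X : Matrix (Fin n ⊕ Fin n) (Fin n ⊕ Fin n) ℝ,
        Y₀ * (Y₀⁻¹ * X) = X := by
      intro X; rw [← Matrix.mul_assoc, Matrix.mul_nonsing_inv _ hY₀det, Matrix.one_mul]
    calc (S * Y₀ * (Y b)⁻¹ * Sᵀ) * (S * Y b * Y₀⁻¹ * Sᵀ)
        = S * (Y₀ * ((Y b)⁻¹ * (Sᵀ * (S * (Y b * (Y₀⁻¹ * Sᵀ)))))) := by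
          simp only [Matrix.mul_assoc]
      _ = S * Sᵀ := by rw [hcSt, hcB, hcY₀]
      _ = 1 := hSS
  calc Y c = 1 * Y c := (Matrix.one_mul _).symm
    _ = ((S * Y₀ * (Y b)⁻¹ * Sᵀ) * (S * Y b * Y₀⁻¹ * Sᵀ)) * Y c := by rw [hMN]
    _ = (S * Y₀ * (Y b)⁻¹ * Sᵀ) * (S * Y b * Y₀⁻¹ * Sᵀ * Y c) := by
        simp only [Matrix.mul_assoc]
    _ = (S * Y₀ * (Y b)⁻¹ * Sᵀ) * Y b := by rw [← h2]
    _ = S * Y₀ * (Y b)⁻¹ * Sᵀ * Y b := rfl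
end
end

section
/- Let S, Y₀, A, C be invertible real matrices of the same size with S² = I and Sᵀ = S. Suppose C = S Y₀ A⁻¹ S A (the factorization of Y(T/2) through B = Y(T/4) = A) and suppose Y(T) := S Y₀ C⁻¹ S C. Then Y₀⁻¹ Y(T) = W², where W = Y₀⁻¹ S Y₀ A⁻¹ S A. -/
open Matrix

noncomputable section

/-- The matrix-algebra step expressing the monodromy-type matrix `Y₀⁻¹ Y(T)` of a
periodic orbit with two time-reversing symmetries `S`, `−S` (with `S` symmetric,
`S² = I`) as the square of `W = Y₀⁻¹ S Y₀ A⁻¹ S A`, where `A = Y(T/4)`,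
`C = Y(T/2) = S Y₀ A⁻¹ S A` and `Y(T) = S Y₀ C⁻¹ S C`. -/
theorem monodromy_is_W_squared (k : ℕ)
    (S Y₀ A C : Matrix (Fin k) (Fin k) ℝ)
    (hS : IsUnit S) (hY₀ : IsUnit Y₀) (hA : IsUnit A) (hC : IsUnit C)
    (hS2 : S * S = 1) (hSsymm : Sᵀ = S)
    (hCdef : C = S * Y₀ * A⁻¹ * S * A) :
    Y₀⁻¹ * (S * Y₀ * C⁻¹ * S * C) = (Y₀⁻¹ * S * Y₀ * A⁻¹ * S * A) ^ 2 := by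
  have hAd := (Matrix.isUnit_iff_isUnit_det A).mp hA
  have hYd := (Matrix.isUnit_iff_isUnit_det Y₀).mp hY₀
  have hSS : ∀ z, S * (S * z) = z := fun z => by
    rw [← Matrix.mul_assoc, hS2, Matrix.one_mul]
  have hAAi : ∀ z, A * (A⁻¹ * z) = z := fun z => by
    rw [← Matrix.mul_assoc, Matrix.mul_nonsing_inv A hAd, Matrix.one_mul]
  have hAiA : ∀ z, A⁻¹ * (A * z) = z := fun z => by
    rw [← Matrix.mul_assoc, Matrix.nonsing_inv_mul A hAd, Matrix.one_mul]
  have hYYi : ∀ z, Y₀ * (Y₀⁻¹ * z) = z := fun z => by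
    rw [← Matrix.mul_assoc, Matrix.mul_nonsing_inv Y₀ hYd, Matrix.one_mul]
  have hYiY : ∀ z, Y₀⁻¹ * (Y₀ * z) = z := fun z => by
    rw [← Matrix.mul_assoc, Matrix.nonsing_inv_mul Y₀ hYd, Matrix.one_mul]
  have hCinv : C⁻¹ = A⁻¹ * S * A * Y₀⁻¹ * S := by
    apply Matrix.inv_eq_left_inv
    rw [hCdef]
    simp only [Matrix.mul_assoc, hSS, hAAi, hAiA, hYYi, hYiY]
    exact Matrix.nonsing_inv_mul A hAd
  rw [hCinv, hCdef, pow_two]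
  simp only [Matrix.mul_assoc, hSS, hAAi, hAiA, hYYi, hYiY]
end
end

section
/- Let n ∈ ℕ, let B be a 2n×2n real symplectic matrix with n×n blocks B = [[B₁,B₂],[B₃,B₄]], let S₁ be a symmetric n×n matrix with S₁² = I, set S = diag(S₁, −S₁) and Λ = diag(I, −I) (2n×2n block matrices), D = −B⁻¹SB, and W = ΛD. Then W is invertible with W⁻¹ = DΛ, and there exists an n×n real matrix K such that (1/2)(W + W⁻¹) = [[Kᵀ, 0],[0, K]]. -/
open Matrix

noncomputable section

/-- For a symplectic `B`, a symmetric `S₁` with `S₁² = I`, `S = diag(S₁, −S₁)`,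
`Λ = diag(I, −I)`, `D = −B⁻¹SB` and `W = ΛD`: `W` is invertible with
`W⁻¹ = DΛ`, and `(W + W⁻¹)/2` has the block-diagonal form `diag(Kᵀ, K)` for some
`n × n` real matrix `K`. -/
theorem W_block_structure (n : ℕ)
    (B : Matrix (Fin n ⊕ Fin n) (Fin n ⊕ Fin n) ℝ)
    (hB : Bᵀ * Jmat n * B = Jmat n)
    (S₁ : Matrix (Fin n) (Fin n) ℝ) (hS₁symm : S₁ᵀ = S₁) (hS₁sq : S₁ * S₁ = 1) :
    IsUnit ((Matrix.fromBlocks 1 0 0 (-1) : Matrix (Fin n ⊕ Fin n) (Fin n ⊕ Fin n) ℝ) *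
      (-(B⁻¹ * Matrix.fromBlocks S₁ 0 0 (-S₁) * B))) ∧
    ((Matrix.fromBlocks 1 0 0 (-1) : Matrix (Fin n ⊕ Fin n) (Fin n ⊕ Fin n) ℝ) *
      (-(B⁻¹ * Matrix.fromBlocks S₁ 0 0 (-S₁) * B)))⁻¹ =
      (-(B⁻¹ * Matrix.fromBlocks S₁ 0 0 (-S₁) * B)) *
        (Matrix.fromBlocks 1 0 0 (-1) : Matrix (Fin n ⊕ Fin n) (Fin n ⊕ Fin n) ℝ) ∧
    ∃ K : Matrix (Fin n) (Fin n) ℝ,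
      (1 / 2 : ℝ) •
        ((Matrix.fromBlocks 1 0 0 (-1) : Matrix (Fin n ⊕ Fin n) (Fin n ⊕ Fin n) ℝ) *
            (-(B⁻¹ * Matrix.fromBlocks S₁ 0 0 (-S₁) * B)) +
          ((Matrix.fromBlocks 1 0 0 (-1) : Matrix (Fin n ⊕ Fin n) (Fin n ⊕ Fin n) ℝ) *
            (-(B⁻¹ * Matrix.fromBlocks S₁ 0 0 (-S₁) * B)))⁻¹) =
        Matrix.fromBlocks Kᵀ 0 0 K := by
  set Λ : Matrix (Fin n ⊕ Fin n) (Fin n ⊕ Fin n) ℝ := Matrix.fromBlocks 1 0 0 (-1) with hΛdef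
  set S : Matrix (Fin n ⊕ Fin n) (Fin n ⊕ Fin n) ℝ := Matrix.fromBlocks S₁ 0 0 (-S₁) with hSdef
  set D : Matrix (Fin n ⊕ Fin n) (Fin n ⊕ Fin n) ℝ := -(B⁻¹ * S * B) with hDdef
  -- basic facts
  have hneg1 : (-1 : Matrix (Fin n ⊕ Fin n) (Fin n ⊕ Fin n) ℝ)
      = fromBlocks (-1) 0 0 (-1) := by
    rw [← fromBlocks_one (l := Fin n) (m := Fin n) (α := ℝ)]
    simp [fromBlocks_neg, -fromBlocks_one]
  have hJ2 : Jmat n * Jmat n = -1 := by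
    rw [Jmat, fromBlocks_multiply, hneg1]; simp
  have hJdet : IsUnit (Jmat n).det := by
    refine isUnit_det_of_right_inverse (B := -(Jmat n)) ?_
    rw [mul_neg, hJ2, neg_neg]
  have hBdet : IsUnit B.det := by
    have h := congrArg Matrix.det hB
    rw [det_mul, det_mul, det_transpose] at h
    have h2 : B.det * B.det * (Jmat n).det = 1 * (Jmat n).det := by
      rw [one_mul]; linarith [h]
    have h3 := mul_right_cancel₀ hJdet.ne_zero h2
    exact IsUnit.of_mul_eq_one _ h3
  have hBinv : B * B⁻¹ = 1 := mul_nonsing_inv B hBdet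
  have hinvB : B⁻¹ * B = 1 := nonsing_inv_mul B hBdet
  have hBTdet : IsUnit Bᵀ.det := by rwa [det_transpose]
  have hBTinv : Bᵀ * (Bᵀ)⁻¹ = 1 := mul_nonsing_inv _ hBTdet
  have hinvBT : (Bᵀ)⁻¹ * Bᵀ = 1 := nonsing_inv_mul _ hBTdet
  -- S * S = 1, Λ * Λ = 1
  have hSS : S * S = 1 := by
    rw [hSdef, fromBlocks_multiply]
    simp [hS₁sq, ← fromBlocks_one]
  have hΛΛ : Λ * Λ = 1 := by
    rw [hΛdef, fromBlocks_multiply]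
    simp [← fromBlocks_one]
  -- D * D = 1
  have hDD : D * D = 1 := by
    rw [hDdef, neg_mul_neg]
    calc B⁻¹ * S * B * (B⁻¹ * S * B)
        = B⁻¹ * S * (B * B⁻¹) * S * B := by noncomm_ring
      _ = B⁻¹ * (S * S) * B := by rw [hBinv]; noncomm_ring
      _ = 1 := by rw [hSS, mul_one, hinvB]
  -- W = Λ * D, right/left inverse D * Λ
  have hW1 : (Λ * D) * (D * Λ) = 1 := by
    calc (Λ * D) * (D * Λ) = Λ * (D * D) * Λ := by noncomm_ring
      _ = 1 := by rw [hDD, mul_one, hΛΛ]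
  have hW2 : (D * Λ) * (Λ * D) = 1 := by
    calc (D * Λ) * (Λ * D) = D * (Λ * Λ) * D := by noncomm_ring
      _ = 1 := by rw [hΛΛ, mul_one, hDD]
  have hWunit : IsUnit (Λ * D) :=
    (isUnit_iff_isUnit_det _).mpr (isUnit_det_of_right_inverse hW1)
  have hWinv : (Λ * D)⁻¹ = D * Λ := inv_eq_right_inv hW1
  refine ⟨hWunit, hWinv, ?_⟩
  -- symplectic relations
  have hJB1 : Bᵀ * Jmat n = Jmat n * B⁻¹ := by
    have := congrArg (· * B⁻¹) hB
    simpa [mul_assoc, hBinv] using this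
  have hJB2 : Jmat n * B = (Bᵀ)⁻¹ * Jmat n := by
    have := congrArg ((Bᵀ)⁻¹ * ·) hB
    simpa [← mul_assoc, hinvBT] using this
  have hJS : Jmat n * S = -(S * Jmat n) := by
    rw [Jmat, hSdef, fromBlocks_multiply, fromBlocks_multiply, fromBlocks_neg]
    simp
  -- Dᵀ = J D J
  have hSsymm : Sᵀ = S := by
    rw [hSdef, fromBlocks_transpose]
    simp [hS₁symm]
  have key : Jmat n * (B⁻¹ * S * B) * Jmat n = Bᵀ * S * (Bᵀ)⁻¹ := by
    calc Jmat n * (B⁻¹ * S * B) * Jmat n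
        = (Jmat n * B⁻¹) * S * (B * Jmat n) := by noncomm_ring
      _ = (Bᵀ * Jmat n) * S * (B * Jmat n) := by rw [← hJB1]
      _ = Bᵀ * (Jmat n * S) * (B * Jmat n) := by noncomm_ring
      _ = Bᵀ * (-(S * Jmat n)) * (B * Jmat n) := by rw [hJS]
      _ = -(Bᵀ * S * ((Jmat n * B) * Jmat n)) := by noncomm_ring
      _ = -(Bᵀ * S * ((Bᵀ)⁻¹ * (Jmat n * Jmat n))) := by rw [hJB2]; noncomm_ring
      _ = -(Bᵀ * S * ((Bᵀ)⁻¹ * (-1))) := by rw [hJ2]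
      _ = Bᵀ * S * (Bᵀ)⁻¹ := by simp [mul_neg, mul_neg_one]
  have hDT : Dᵀ = Jmat n * D * Jmat n := by
    have h1 : Jmat n * D * Jmat n = -(Jmat n * (B⁻¹ * S * B) * Jmat n) := by
      rw [hDdef]; noncomm_ring
    rw [h1, key, hDdef, transpose_neg, transpose_mul, transpose_mul, hSsymm,
      transpose_nonsing_inv]
    noncomm_ring
  -- blocks of D
  set D₁ := D.toBlocks₁₁ with hD1
  set D₂ := D.toBlocks₁₂ with hD2
  set D₃ := D.toBlocks₂₁ with hD3
  set D₄ := D.toBlocks₂₂ with hD4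
  have hDblocks : D = fromBlocks D₁ D₂ D₃ D₄ := (fromBlocks_toBlocks D).symm
  have hblock : D₁ᵀ = -D₄ := by
    have h := hDT
    rw [hDblocks, Jmat, fromBlocks_transpose, fromBlocks_multiply, fromBlocks_multiply] at h
    have := congrArg Matrix.toBlocks₁₁ h
    simpa using this
  refine ⟨-D₄, ?_⟩
  have hKT : (-D₄)ᵀ = D₁ := by
    rw [← hblock, transpose_transpose]
  have half : ∀ X : Matrix (Fin n) (Fin n) ℝ, (1 / 2 : ℝ) • (X + X) = X := fun X => by
    rw [← two_smul ℝ X, smul_smul]; norm_num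
  rw [hWinv, hKT]
  rw [hDblocks, hΛdef, fromBlocks_multiply, fromBlocks_multiply, fromBlocks_add,
    fromBlocks_smul]
  rw [fromBlocks_inj]
  refine ⟨by simpa using half D₁, by simp, by simp, by simpa [neg_add] using half (-D₄)⟩
end
end

section
/- Let γ be a T-periodic solution of a Hamiltonian system z' = J∇Γ(z) on ℝ^{2n} (Γ C² on an open set containing the orbit), with γ'(0) ≠ 0, and let X(s) be the fundamental matrix solution of ξ' = JD²Γ(γ(s))ξ with X(0) = I. Let S be a matrix with S² = I such that γ(s) = −Sγ(T/2 − s) for all s and Sγ'(0) = −γ'(0). Let Y₀ be an orthogonal matrix, Y(s) = X(s)Y₀, W = Y₀ᵀY(T/2), and v = Y₀ᵀγ'(0)/‖γ'(0)‖. Then Wv = −v; that is, −1 is an eigenvalue of W with eigenvector v. -/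
open Matrix
noncomputable section

variable {ι : Type*} [Fintype ι] [DecidableEq ι]

-- basic setup facts about C² functions
theorem sndDerivAt {Ω : Set (ι → ℝ)} (hΩ : IsOpen Ω)
    {Γ : (ι → ℝ) → ℝ} (hΓ : ContDiffOn ℝ 2 Γ Ω) {z : ι → ℝ} (hz : z ∈ Ω) :
    HasFDerivAt (fderiv ℝ Γ) (fderiv ℝ (fderiv ℝ Γ) z) z := by
  have hC1 : ContDiffOn ℝ 1 (fderiv ℝ Γ) Ω := hΓ.fderiv_of_isOpen hΩ (by norm_num)
  exact (((hC1 z hz).contDiffAt (hΩ.mem_nhds hz)).differentiableAt one_ne_zero).hasFDerivAt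

theorem hessM_eq {Ω : Set (ι → ℝ)} (hΩ : IsOpen Ω)
    {Γ : (ι → ℝ) → ℝ} (hΓ : ContDiffOn ℝ 2 Γ Ω) {z : ι → ℝ} (hz : z ∈ Ω) (i j : ι) :
    hessM Γ z i j = fderiv ℝ (fderiv ℝ Γ) z (Pi.single i 1) (Pi.single j 1) := by
  have h : HasFDerivAt (fun w => fderiv ℝ Γ w (Pi.single j 1))
      ((ContinuousLinearMap.apply ℝ ℝ (Pi.single j 1 : ι → ℝ)).comp (fderiv ℝ (fderiv ℝ Γ) z)) z :=
    (ContinuousLinearMap.apply ℝ ℝ (Pi.single j 1 : ι → ℝ)).hasFDerivAt.comp z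
      (sndDerivAt hΩ hΓ hz)
  simp only [hessM, Matrix.of_apply, h.fderiv]
  rfl

theorem hessM_symm {Ω : Set (ι → ℝ)} (hΩ : IsOpen Ω)
    {Γ : (ι → ℝ) → ℝ} (hΓ : ContDiffOn ℝ 2 Γ Ω) {z : ι → ℝ} (hz : z ∈ Ω)
    (u w : ι → ℝ) :
    fderiv ℝ (fderiv ℝ Γ) z u w = fderiv ℝ (fderiv ℝ Γ) z w u := by
  refine second_derivative_symmetric_of_eventually (f := Γ) ?_ (sndDerivAt hΩ hΓ hz) u w
  have hmem : ∀ᶠ y in nhds z, y ∈ Ω := hΩ.mem_nhds hz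
  exact hmem.mono fun y hy =>
    (((hΓ y hy).contDiffAt (hΩ.mem_nhds hy)).differentiableAt (by norm_num)).hasFDerivAt

theorem hasDerivAt_grad_comp {Ω : Set (ι → ℝ)} (hΩ : IsOpen Ω)
    {Γ : (ι → ℝ) → ℝ} (hΓ : ContDiffOn ℝ 2 Γ Ω) {γ : ℝ → ι → ℝ} {d : ι → ℝ} {s : ℝ}
    (hz : γ s ∈ Ω) (hγ : HasDerivAt γ d s) :
    HasDerivAt (fun t => grad Γ (γ t)) ((hessM Γ (γ s)).mulVec d) s := by
  rw [hasDerivAt_pi]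
  intro j
  have hFg : HasDerivAt (fun t => fderiv ℝ Γ (γ t)) (fderiv ℝ (fderiv ℝ Γ) (γ s) d) s :=
    (sndDerivAt hΩ hΓ hz).comp_hasDerivAt s hγ
  have h2 : HasDerivAt (fun t => fderiv ℝ Γ (γ t) (Pi.single j 1))
      (fderiv ℝ (fderiv ℝ Γ) (γ s) d (Pi.single j 1)) s :=
    (ContinuousLinearMap.apply ℝ ℝ (Pi.single j 1 : ι → ℝ)).hasFDerivAt.comp_hasDerivAt s hFg
  have key : fderiv ℝ (fderiv ℝ Γ) (γ s) d (Pi.single j 1)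
      = (hessM Γ (γ s)).mulVec d j := by
    conv_lhs => rw [pi_eq_sum_univ d]
    rw [map_sum, ContinuousLinearMap.sum_apply]
    simp only [_root_.map_smul, ContinuousLinearMap.smul_apply, smul_eq_mul]
    rw [Matrix.mulVec]
    simp only [dotProduct]
    refine Finset.sum_congr rfl fun i _ => ?_
    rw [hessM_eq hΩ hΓ hz, hessM_symm hΩ hΓ hz, mul_comm]
    congr 2
    ext k
    simp [Pi.single_apply, eq_comm]
  rw [key] at h2
  exact h2

theorem continuous_hessM_comp {Ω : Set (ι → ℝ)} (hΩ : IsOpen Ω)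
    {Γ : (ι → ℝ) → ℝ} (hΓ : ContDiffOn ℝ 2 Γ Ω) {γ : ℝ → ι → ℝ}
    (hγ : Continuous γ) (hmem : ∀ s, γ s ∈ Ω) :
    Continuous (fun s => hessM Γ (γ s)) := by
  have hC1 : ContDiffOn ℝ 1 (fderiv ℝ Γ) Ω := hΓ.fderiv_of_isOpen hΩ (by norm_num)
  have hBcont : ContinuousOn (fderiv ℝ (fderiv ℝ Γ)) Ω :=
    hC1.continuousOn_fderiv_of_isOpen hΩ le_rfl
  have hB : Continuous (fun s => fderiv ℝ (fderiv ℝ Γ) (γ s)) :=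
    hBcont.comp_continuous hγ hmem
  refine continuous_pi fun i => continuous_pi fun j => ?_
  have : Continuous (fun s => fderiv ℝ (fderiv ℝ Γ) (γ s) (Pi.single i 1) (Pi.single j 1)) :=
    (ContinuousLinearMap.apply ℝ ℝ (Pi.single j 1 : ι → ℝ)).continuous.comp
      ((ContinuousLinearMap.apply ℝ ((ι → ℝ) →L[ℝ] ℝ) (Pi.single i 1 : ι → ℝ)).continuous.comp hB)
  convert this using 2 with s
  exact hessM_eq hΩ hΓ (hmem s) i j

theorem minus_one_eigenvalue_of_W_core (n : ℕ)
    (Ω : Set ((Fin n ⊕ Fin n) → ℝ)) (hΩ : IsOpen Ω)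
    (Γ : ((Fin n ⊕ Fin n) → ℝ) → ℝ) (hΓ : ContDiffOn ℝ 2 Γ Ω)
    (T : ℝ) (hT : 0 < T)
    (γ : ℝ → (Fin n ⊕ Fin n) → ℝ) (hmem : ∀ s, γ s ∈ Ω)
    (hsol : ∀ s : ℝ, HasDerivAt γ ((Jmat n).mulVec (grad Γ (γ s))) s)
    (X : ℝ → Matrix (Fin n ⊕ Fin n) (Fin n ⊕ Fin n) ℝ)
    (hX0 : X 0 = 1)
    (hX : ∀ (s : ℝ) (i j : Fin n ⊕ Fin n),
      HasDerivAt (fun t => X t i j) ((Jmat n * hessM Γ (γ s) * X s) i j) s)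
    (S : Matrix (Fin n ⊕ Fin n) (Fin n ⊕ Fin n) ℝ)
    (hsymm : ∀ s : ℝ, γ s = -S.mulVec (γ (T / 2 - s)))
    (hSd : S.mulVec ((Jmat n).mulVec (grad Γ (γ 0))) = -((Jmat n).mulVec (grad Γ (γ 0)))) :
    (X (T / 2)).mulVec ((Jmat n).mulVec (grad Γ (γ 0)))
      = -((Jmat n).mulVec (grad Γ (γ 0))) := by
  classical
  set d : ℝ → ((Fin n ⊕ Fin n) → ℝ) := fun s => (Jmat n).mulVec (grad Γ (γ s)) with hd_def
  have hγcont : Continuous γ := continuous_iff_continuousAt.mpr fun s => (hsol s).continuousAt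
  -- derivative of the velocity d
  have hd' : ∀ s, HasDerivAt d ((Jmat n * hessM Γ (γ s)).mulVec (d s)) s := by
    intro s
    have hg : HasDerivAt (fun t => grad Γ (γ t)) ((hessM Γ (γ s)).mulVec (d s)) s :=
      hasDerivAt_grad_comp hΩ hΓ (hmem s) (hsol s)
    have h2 := ((Matrix.mulVecLin (Jmat n)).toContinuousLinearMap).hasFDerivAt.comp_hasDerivAt
      s hg
    simpa [Matrix.mulVec_mulVec, Function.comp_def] using h2
  -- derivative of s ↦ X s *ᵥ d 0
  have hXd : ∀ s, HasDerivAt (fun t => (X t).mulVec (d 0))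
      (((Jmat n * hessM Γ (γ s)) * X s).mulVec (d 0)) s := by
    intro s
    rw [hasDerivAt_pi]
    intro i
    have h := HasDerivAt.fun_sum (fun j (_ : j ∈ Finset.univ) => (hX s i j).mul_const (d 0 j))
    simpa [Matrix.mulVec, dotProduct] using h
  -- the Lipschitz vector field
  set A : ℝ → Matrix (Fin n ⊕ Fin n) (Fin n ⊕ Fin n) ℝ := fun s => Jmat n * hessM Γ (γ s)
    with hA_def
  have hAcont : Continuous A :=
    continuous_const.matrix_mul (continuous_hessM_comp hΩ hΓ hγcont hmem)
  let g : Matrix (Fin n ⊕ Fin n) (Fin n ⊕ Fin n) ℝ →ₗ[ℝ] (((Fin n ⊕ Fin n) → ℝ) →L[ℝ] ((Fin n ⊕ Fin n) → ℝ)) :=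
    (LinearMap.toContinuousLinearMap.toLinearMap).comp Matrix.toLin'.toLinearMap
  set clm : ℝ → (((Fin n ⊕ Fin n) → ℝ) →L[ℝ] ((Fin n ⊕ Fin n) → ℝ)) := fun s => g (A s) with hclm_def
  have hclm_apply : ∀ s x, clm s x = (A s).mulVec x := by
    intro s x
    simp [hclm_def, g, Matrix.toLin'_apply]
  have hclmcont : Continuous clm := g.continuous_of_finiteDimensional.comp hAcont
  have hIcc : (Set.Icc (0:ℝ) (T/2)).Nonempty := ⟨0, le_rfl, by positivity⟩
  obtain ⟨s₀, hs₀, hbd⟩ := isCompact_Icc.exists_isMaxOn hIcc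
    (continuous_norm.comp hclmcont).continuousOn
  set c : ℝ → ℝ := fun t => min (max t 0) (T/2) with hc_def
  have hcmem : ∀ t, c t ∈ Set.Icc (0:ℝ) (T/2) :=
    fun t => ⟨le_min (le_max_right t 0) (by positivity), min_le_right _ _⟩
  set v : ℝ → ((Fin n ⊕ Fin n) → ℝ) → ((Fin n ⊕ Fin n) → ℝ) := fun t x => clm (c t) x with hv_def
  have hv : ∀ t, LipschitzWith ‖clm s₀‖₊ (v t) := by
    intro t
    refine ((clm (c t)).lipschitz).weaken ?_
    have := hbd (hcmem t)
    simpa [← NNReal.coe_le_coe] using this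
  have hct : ∀ t ∈ Set.Ico (0:ℝ) (T/2), c t = t := by
    intro t ht
    simp [hc_def, max_eq_left ht.1, min_eq_left ht.2.le]
  have huniq : Set.EqOn (fun t => (X t).mulVec (d 0)) d (Set.Icc 0 (T/2)) := by
    refine ODE_solution_unique hv ?_ ?_ ?_ ?_ ?_
    · exact (Continuous.continuousOn (continuous_iff_continuousAt.mpr
        fun s => (hXd s).continuousAt))
    · intro t ht
      have := (hXd t).hasDerivWithinAt (s := Set.Ici t)
      rw [hv_def]
      simp only [hct t ht, hclm_apply, Matrix.mulVec_mulVec]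
      exact this
    · exact (Continuous.continuousOn (continuous_iff_continuousAt.mpr
        fun s => (hd' s).continuousAt))
    · intro t ht
      have := (hd' t).hasDerivWithinAt (s := Set.Ici t)
      rw [hv_def]
      simp only [hct t ht, hclm_apply]
      exact this
    · simp [hX0, Matrix.one_mulVec]
  have hkey : (X (T/2)).mulVec (d 0) = d (T/2) :=
    huniq ⟨by positivity, le_rfl⟩
  -- symmetry gives d (T/2) = - d 0
  have hsym : ∀ s, d s = S.mulVec (d (T/2 - s)) := by
    intro s
    have hin : HasDerivAt (fun t : ℝ => T/2 - t) (-1) s := (hasDerivAt_id s).const_sub (T/2)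
    have h2 : HasDerivAt (fun t => γ (T/2 - t)) ((-1 : ℝ) • d (T/2 - s)) s :=
      (hsol (T/2 - s)).scomp s hin
    have h3 : HasDerivAt (fun t => -(S.mulVec (γ (T/2 - t)))) (S.mulVec (d (T/2 - s))) s := by
      have h4 := (((Matrix.mulVecLin S).toContinuousLinearMap).hasFDerivAt.comp_hasDerivAt
        s h2).neg
      convert h4 using 1
      all_goals (ext; simp [Matrix.mulVec_neg])
    have h5 : HasDerivAt γ (S.mulVec (d (T/2 - s))) s :=
      h3.congr_of_eventuallyEq (Filter.Eventually.of_forall hsymm)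
    exact (hsol s).unique h5
  have hfin : d (T/2) = -(d 0) := by
    have h := hsym (T/2)
    rw [sub_self] at h
    rw [h]
    exact hSd
  exact hkey.trans hfin

/-- For a `T`-periodic solution `γ` of `z' = J∇Γ(z)` with `γ'(0) ≠ 0`,
a matrix `S` with `S² = I`, `γ(s) = −Sγ(T/2 − s)` and `Sγ'(0) = −γ'(0)`, and an
orthogonal `Y₀`, the matrix `W = Y₀ᵀ Y(T/2) = Y₀ᵀ X(T/2) Y₀` satisfies
`Wv = −v`, where `v = Y₀ᵀγ'(0)/‖γ'(0)‖` (with the Euclidean norm); that is,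
`−1` is an eigenvalue of `W` with eigenvector `v`.
Here `γ'(s) = J∇Γ(γ(s))` is the velocity of the orbit. -/
theorem minus_one_eigenvalue_of_W (n : ℕ)
    (Ω : Set ((Fin n ⊕ Fin n) → ℝ)) (hΩ : IsOpen Ω)
    (Γ : ((Fin n ⊕ Fin n) → ℝ) → ℝ) (hΓ : ContDiffOn ℝ 2 Γ Ω)
    (T : ℝ) (hT : 0 < T)
    (γ : ℝ → (Fin n ⊕ Fin n) → ℝ) (hmem : ∀ s, γ s ∈ Ω)
    (hsol : ∀ s : ℝ, HasDerivAt γ ((Jmat n).mulVec (grad Γ (γ s))) s)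
    (hper : Function.Periodic γ T)
    (hne : (Jmat n).mulVec (grad Γ (γ 0)) ≠ 0)
    (X : ℝ → Matrix (Fin n ⊕ Fin n) (Fin n ⊕ Fin n) ℝ)
    (hX0 : X 0 = 1)
    (hX : ∀ (s : ℝ) (i j : Fin n ⊕ Fin n),
      HasDerivAt (fun t => X t i j) ((Jmat n * hessM Γ (γ s) * X s) i j) s)
    (S : Matrix (Fin n ⊕ Fin n) (Fin n ⊕ Fin n) ℝ)
    (hS2 : S * S = 1)
    (hsymm : ∀ s : ℝ, γ s = -S.mulVec (γ (T / 2 - s)))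
    (hSd : S.mulVec ((Jmat n).mulVec (grad Γ (γ 0))) = -((Jmat n).mulVec (grad Γ (γ 0))))
    (Y₀ : Matrix (Fin n ⊕ Fin n) (Fin n ⊕ Fin n) ℝ)
    (hY₀ : Y₀ᵀ * Y₀ = 1) :
    (Y₀ᵀ * (X (T / 2) * Y₀)).mulVec
        ((Real.sqrt (∑ i, ((Jmat n).mulVec (grad Γ (γ 0)) i) ^ 2))⁻¹ •
          Y₀ᵀ.mulVec ((Jmat n).mulVec (grad Γ (γ 0)))) =
      -((Real.sqrt (∑ i, ((Jmat n).mulVec (grad Γ (γ 0)) i) ^ 2))⁻¹ •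
          Y₀ᵀ.mulVec ((Jmat n).mulVec (grad Γ (γ 0)))) := by
  have hkey := minus_one_eigenvalue_of_W_core n Ω hΩ Γ hΓ T hT γ hmem hsol X hX0 hX S hsymm hSd
  rw [Matrix.mulVec_smul, Matrix.mulVec_mulVec,
    show Y₀ᵀ * (X (T/2) * Y₀) * Y₀ᵀ = Y₀ᵀ * X (T/2) by
      rw [mul_assoc Y₀ᵀ, mul_assoc (X (T/2)), mul_eq_one_comm.mp hY₀, mul_one],
    ← Matrix.mulVec_mulVec, hkey, Matrix.mulVec_neg, smul_neg]
end
end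

section
/- Let ζ ≠ 0 and let K be a real 4×4 matrix of the form [[−1,0,0,k₁₄],[0,a,b,0],[0,c,d,0],[0,0,0,e]]. If the row vector u = (0, −ζ, √8, 0) satisfies uKᵀ = −u, then b = (a + 1)ζ/√8 and c = (d + 1)√8/ζ. In particular, −1 is an eigenvalue of the central 2×2 block [[a,b],[c,d]], and all eigenvalues of K are real. -/
open Matrix

noncomputable section

/-- For `K` of the reduced form `[[−1,0,0,k₁₄],[0,a,b,0],[0,c,d,0],[0,0,0,e]]`,
if the row vector `u = (0, −ζ, √8, 0)` (with `ζ ≠ 0`) satisfies `uKᵀ = −u`, then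
`b = (a+1)ζ/√8` and `c = (d+1)√8/ζ`; in particular `−1` is an eigenvalue of the
central block `[[a,b],[c,d]]`, and all (complex) eigenvalues of `K` are real. -/
theorem angular_momentum_eigenvalue_relations
    (ζ a b c d e k₁₄ : ℝ) (hζ : ζ ≠ 0)
    (K : Matrix (Fin 4) (Fin 4) ℝ)
    (hK : K = !![-1, 0, 0, k₁₄; 0, a, b, 0; 0, c, d, 0; 0, 0, 0, e])
    (hu : Matrix.vecMul (![0, -ζ, Real.sqrt 8, 0] : Fin 4 → ℝ) Kᵀ =
      -(![0, -ζ, Real.sqrt 8, 0] : Fin 4 → ℝ)) :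
    b = (a + 1) * ζ / Real.sqrt 8 ∧
    c = (d + 1) * Real.sqrt 8 / ζ ∧
    (∃ w : Fin 2 → ℝ, w ≠ 0 ∧ (!![a, b; c, d]).mulVec w = (-1 : ℝ) • w) ∧
    (∀ μ : ℂ, (∃ v : Fin 4 → ℂ, v ≠ 0 ∧
        (K.map (Complex.ofReal)).mulVec v = μ • v) → μ.im = 0) := by
  have h8 : Real.sqrt 8 ≠ 0 := ne_of_gt (Real.sqrt_pos.mpr (by norm_num))
  have h1 := congrFun hu 1
  have h2 := congrFun hu 2
  simp [hK, Matrix.vecMul, dotProduct, Fin.sum_univ_four] at h1 h2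
  -- h1 : -ζ * a + √8 * b = ζ (or similar), h2 : -ζ * c + √8 * d = -√8
  have hb : b = (a + 1) * ζ / Real.sqrt 8 := by
    field_simp
    linarith [h1]
  have hc : c = (d + 1) * Real.sqrt 8 / ζ := by
    field_simp
    linarith [h2]
  have hbc : b * c = (a + 1) * (d + 1) := by
    rw [hb, hc]; field_simp
  refine ⟨hb, hc, ⟨![ζ, -Real.sqrt 8], ?_, ?_⟩, ?_⟩
  · intro h
    have := congrFun h 0
    simp at this
    exact hζ this
  · have hb8 : Real.sqrt 8 * b = (a + 1) * ζ := by rw [hb]; field_simp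
    have hcζ : ζ * c = (d + 1) * Real.sqrt 8 := by rw [hc]; field_simp
    funext i
    fin_cases i <;>
      simp only [Matrix.mulVec, dotProduct, Fin.sum_univ_two, Fin.isValue,
        Matrix.cons_val', Matrix.cons_val_zero, Matrix.cons_val_one, Matrix.head_cons,
        Matrix.empty_val', Matrix.cons_val_fin_one, Matrix.head_fin_const, Fin.zero_eta,
        Fin.mk_one, Pi.smul_apply, smul_eq_mul, id_eq, Matrix.of_apply]
    · linear_combination -hb8
    · linear_combination hcζ
  · rintro μ ⟨v, hv, hmv⟩
    have e0 := congrFun hmv 0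
    have e1 := congrFun hmv 1
    have e2 := congrFun hmv 2
    have e3 := congrFun hmv 3
    simp [hK, Matrix.mulVec, dotProduct, Fin.sum_univ_four, Matrix.map] at e0 e1 e2 e3
    by_cases h3 : v 3 = 0
    · by_cases h12 : v 1 = 0 ∧ v 2 = 0
      · -- then v 0 ≠ 0 and μ = -1
        have h0 : v 0 ≠ 0 := by
          intro h0
          apply hv
          funext i
          fin_cases i
          exacts [h0, h12.1, h12.2, h3]
        have h' : (μ + 1) * v 0 = 0 := by
          rw [h3] at e0
          linear_combination -e0
        rcases mul_eq_zero.mp h' with h | h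
        · have : μ = -1 := by linear_combination h
          rw [this]; simp
        · exact absurd h h0
      · -- eigenvalue of central block
        have key : (μ + 1) * (μ - (↑a + ↑d + 1)) = 0 := by
          have hbcC : (b : ℂ) * c = ((a : ℂ) + 1) * ((d : ℂ) + 1) := by
            exact_mod_cast congrArg (Complex.ofReal) hbc
          rcases not_and_or.mp h12 with h1' | h2'
          · have hq : ((μ - a) * (μ - d) - b * c) * v 1 = 0 := by
              linear_combination (-(μ : ℂ) + d) * e1 - (b : ℂ) * e2
            rcases mul_eq_zero.mp hq with h | h
            · linear_combination h + hbcC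
            · exact absurd h h1'
          · have hq : ((μ - a) * (μ - d) - b * c) * v 2 = 0 := by
              linear_combination (-(c : ℂ)) * e1 + (-(μ : ℂ) + a) * e2
            rcases mul_eq_zero.mp hq with h | h
            · linear_combination h + hbcC
            · exact absurd h h2'
        rcases mul_eq_zero.mp key with h | h
        · have : μ = -1 := by linear_combination h
          rw [this]; simp
        · have : μ = (a : ℂ) + d + 1 := by linear_combination h
          rw [this]; simp
    · rcases e3 with h | h
      · rw [← h]; simp
      · exact absurd h h3
end
end

section
/- Let m ∈ (0,1], α > 0, and x₂ > 0, and set x₁ = αx₂. If the homographic condition ẍ₁ = αẍ₂ holds for the rhomboidal equations of motion, i.e. if −1/(4x₁²) − 2m x₁/(x₁²+x₂²)^{3/2} = α(−m/(4x₂²) − 2x₂/(x₁²+x₂²)^{3/2}), then α is a root of the polynomial equation (1+α²)³(mα³ − 1)² − 64α⁶(1−m)² = 0. -/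
noncomputable section

/-- If the homographic condition `ẍ₁ = αẍ₂` holds for the rhomboidal equations of
motion with `x₁ = αx₂`, then `α` is a root of
`(1+α²)³(mα³ − 1)² − 64α⁶(1−m)² = 0`. -/
theorem homographic_alpha_polynomial (m α x₁ x₂ : ℝ)
    (hm : m ∈ Set.Ioc (0 : ℝ) 1) (hα : 0 < α) (hx₂ : 0 < x₂)
    (hx₁ : x₁ = α * x₂)
    (heq : -1 / (4 * x₁ ^ 2) - 2 * m * x₁ / ((x₁ ^ 2 + x₂ ^ 2) ^ ((3 : ℝ) / 2)) =
      α * (-m / (4 * x₂ ^ 2) - 2 * x₂ / ((x₁ ^ 2 + x₂ ^ 2) ^ ((3 : ℝ) / 2)))) :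
    (1 + α ^ 2) ^ 3 * (m * α ^ 3 - 1) ^ 2 - 64 * α ^ 6 * (1 - m) ^ 2 = 0 := by
  subst hx₁
  set t : ℝ := (1 + α ^ 2) ^ ((3 : ℝ) / 2) with ht
  have h1 : (0 : ℝ) < 1 + α ^ 2 := by positivity
  have ht_pos : 0 < t := Real.rpow_pos_of_pos h1 _
  have hden : ((α * x₂) ^ 2 + x₂ ^ 2) ^ ((3 : ℝ) / 2) = x₂ ^ 3 * t := by
    have : (α * x₂) ^ 2 + x₂ ^ 2 = x₂ ^ 2 * (1 + α ^ 2) := by ring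
    rw [this, Real.mul_rpow (by positivity) (by positivity), ht]
    congr 1
    rw [← Real.rpow_natCast x₂ 2, ← Real.rpow_mul hx₂.le]
    norm_num
  rw [hden] at heq
  have ht2 : t ^ 2 = (1 + α ^ 2) ^ 3 := by
    rw [ht, ← Real.rpow_natCast _ 2, ← Real.rpow_mul h1.le]
    norm_num
  have key : (m * α ^ 3 - 1) * t = 8 * α ^ 3 * (m - 1) := by
    have hx2 : x₂ ≠ 0 := hx₂.ne'
    have hαne : α ≠ 0 := hα.ne'
    have htne : t ≠ 0 := ht_pos.ne'
    field_simp at heq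
    have key' : (m * α ^ 3 - 1) * t * (4 * x₂ ^ 8 * t) =
        8 * α ^ 3 * (m - 1) * (4 * x₂ ^ 8 * t) := by linear_combination (4 * x₂ ^ 8 * t) * heq
    exact mul_right_cancel₀ (by positivity : (4 * x₂ ^ 8 * t) ≠ 0) key'
  linear_combination ((m * α ^ 3 - 1) * t + 8 * α ^ 3 * (m - 1)) * key - (m * α ^ 3 - 1) ^ 2 * ht2
end
end
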